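/- arXiv:2602.20919 — 8 statements merged into one kernel-verified Lean document; each statement's English description precedes it below -/
import Mathlib

section
/- Let F be a field of characteristic 0 or characteristic p > n, let ξ ∈ F be nonzero, and let a_1, ..., a_n ∈ F. Set P(x) = ∏_{j=1}^n (1 - ξ a_j x). If the coefficient of x^k in P(x)^n is 0 for all 1 ≤ k ≤ n-1, then the elementary symmetric polynomials e_k(a_1, ..., a_n) vanish for all 1 ≤ k ≤ n-1; consequently ∏_{i=1}^n (x - a_i) = x^n + (-1)^n e_n(a_1,...,a_n). -/
open Finset Polynomial


lemma coeffA {F : Type*} [CommRing F] {ι : Type*} [DecidableEq ι] (s : Finset ι) (b : ι → F) :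
    ∀ k, (∏ j ∈ s, (1 + C (b j) * X)).coeff k = ∑ t ∈ s.powersetCard k, ∏ i ∈ t, b i := by
  induction s using Finset.induction_on with
  | empty =>
    intro k
    cases k with
    | zero => simp
    | succ k =>
      rw [Finset.powersetCard_eq_empty.mpr (by simp)]
      simp [Polynomial.coeff_one]
  | @insert x s hx ih =>
    intro k
    rw [Finset.prod_insert hx, add_mul, one_mul, coeff_add, mul_assoc, coeff_C_mul]
    cases k with
    | zero => simp [ih 0]
    | succ k =>
      rw [coeff_X_mul, ih, ih, Finset.powersetCard_succ_insert hx,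
        Finset.sum_union, Finset.sum_image]
      · congr 1
        rw [Finset.mul_sum]
        apply Finset.sum_congr rfl
        intro t ht
        rw [Finset.mem_powersetCard] at ht
        rw [Finset.prod_insert (fun h => hx (ht.1 h))]
      · intro t ht u hu h
        rw [Finset.mem_coe, Finset.mem_powersetCard] at ht hu
        have hxt : x ∉ t := fun h => hx (ht.1 h)
        have hxu : x ∉ u := fun h => hx (hu.1 h)
        rw [← Finset.erase_insert hxt, ← Finset.erase_insert hxu, h]
      · rw [Finset.disjoint_right]
        intro t ht ht'
        rw [Finset.mem_image] at ht
        obtain ⟨u, hu, rfl⟩ := ht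
        rw [Finset.mem_powersetCard] at ht' hu
        exact hx (ht'.1 (Finset.mem_insert_self x u))

lemma coeffB {F : Type*} [Field F] (n : ℕ) (hn : (n : F) ≠ 0) (Q : F[X])
    (hQ0 : Q.coeff 0 = 1) (m : ℕ)
    (h : ∀ k, 1 ≤ k → k ≤ m → (Q ^ n).coeff k = 0) :
    ∀ k, 1 ≤ k → k ≤ m → Q.coeff k = 0 := by
  intro k
  induction k using Nat.strong_induction_on with
  | _ k ih =>
    intro hk1 hkm
    set R : F[X] := Q - 1 with hR
    have hRc : ∀ j, j < k → R.coeff j = 0 := by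
      intro j hj
      rcases Nat.eq_zero_or_pos j with rfl | hj0
      · simp [hR, hQ0]
      · have : Q.coeff j = 0 := ih j hj hj0 (le_trans (Nat.le_of_lt hj) hkm)
        simp [hR, Polynomial.coeff_one, this, Nat.pos_iff_ne_zero.mp hj0]
    have hdvd : (X : F[X]) ^ k ∣ R := (Polynomial.X_pow_dvd_iff).mpr hRc
    have hnn : 1 ≤ n := by
      rcases Nat.eq_zero_or_pos n with rfl | h
      · simp at hn
      · exact h
    have hQ : Q = 1 + R := by ring
    have hpow : (Q ^ n).coeff k =
        ∑ i ∈ Finset.range (n + 1), ((1 : F[X]) ^ i * R ^ (n - i) * (n.choose i : F[X])).coeff k := by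
      rw [hQ, add_pow, Polynomial.finset_sum_coeff]
    have hterm : ∀ i ∈ Finset.range (n + 1),
        ((1 : F[X]) ^ i * R ^ (n - i) * (n.choose i : F[X])).coeff k
          = if i = n - 1 then (n : F) * R.coeff k else 0 := by
      intro i hi
      rw [Finset.mem_range] at hi
      rw [one_pow, one_mul]
      rcases Nat.lt_trichotomy (n - i) 1 with h1 | h1 | h1
      · have h0 : n - i = 0 := Nat.lt_one_iff.mp h1
        rw [h0]
        simp only [pow_zero, one_mul]
        rw [if_neg (by omega)]
        rw [← Polynomial.C_eq_natCast, Polynomial.coeff_C]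
        rw [if_neg (by omega)]
      · have hi1 : i = n - 1 := by omega
        rw [h1, pow_one, if_pos hi1, hi1]
        rw [← Polynomial.C_eq_natCast, mul_comm, Polynomial.coeff_C_mul]
        congr 1
        rw [Nat.choose_symm hnn, Nat.choose_one_right]
      · rw [if_neg (by omega)]
        have hd : (X : F[X]) ^ (k * (n - i)) ∣ R ^ (n - i) := by
          rw [pow_mul]
          exact pow_dvd_pow_of_dvd hdvd _
        have : (R ^ (n - i)).coeff k = 0 := by
          have := (Polynomial.X_pow_dvd_iff.mp hd) k ?_
          · exact this
          · calc k = k * 1 := (mul_one k).symm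
              _ < k * (n - i) := by nlinarith
        rw [Polynomial.coeff_mul_natCast, this, zero_mul]
    rw [Finset.sum_congr rfl hterm, Finset.sum_ite_eq' (Finset.range (n + 1)) (n - 1)
      (fun _ => (n : F) * R.coeff k), if_pos (by simp)] at hpow
    have h0 : (Q ^ n).coeff k = 0 := h k hk1 hkm
    rw [h0] at hpow
    have hRk : R.coeff k = 0 := by
      rcases mul_eq_zero.mp hpow.symm with hc | hc
      · exact absurd hc hn
      · exact hc
    have hq : Q.coeff k = R.coeff k := by
      rw [hR, Polynomial.coeff_sub, Polynomial.coeff_one, if_neg (by omega : ¬ k = 0), sub_zero]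
    rw [hq, hRk]

/-- if the coefficients of `x^k` in `P(x)^n` vanish for
`1 ≤ k ≤ n-1`, where `P(x) = ∏ (1 - ξ a_j x)`, then the elementary symmetric
polynomials `e_k(a_1, …, a_n)` vanish for `1 ≤ k ≤ n-1`, and consequently
`∏ (x - a_i) = x^n + (-1)^n e_n`. -/
theorem stmt_3 (F : Type*) [Field F] (n : ℕ) (hn : 0 < n)
    (hchar : ringChar F = 0 ∨ n < ringChar F)
    (ξ : F) (hξ : ξ ≠ 0) (a : Fin n → F)
    (hcoeff : ∀ k : ℕ, 1 ≤ k → k ≤ n - 1 →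
      ((∏ j, (1 - C (ξ * a j) * X)) ^ n).coeff k = 0) :
    (∀ k : ℕ, 1 ≤ k → k ≤ n - 1 →
        ∑ t ∈ Finset.univ.powersetCard k, ∏ i ∈ t, a i = 0) ∧
      ∏ i, (X - C (a i)) =
        X ^ n + C ((-1) ^ n *
          ∑ t ∈ Finset.univ.powersetCard n, ∏ i ∈ t, a i) := by
  classical
  set Q : F[X] := ∏ j, (1 - C (ξ * a j) * X) with hQdef
  have hQform : Q = ∏ j, (1 + C (-(ξ * a j)) * X) := by
    apply Finset.prod_congr rfl
    intro j _
    rw [map_neg, neg_mul, sub_eq_add_neg]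
  have hQcoeff : ∀ k, Q.coeff k =
      ∑ t ∈ Finset.univ.powersetCard k, ∏ i ∈ t, -(ξ * a i) := by
    intro k
    rw [hQform]
    exact coeffA Finset.univ (fun i => -(ξ * a i)) k
  have hQ0 : Q.coeff 0 = 1 := by
    rw [hQcoeff 0, Finset.powersetCard_zero]
    simp
  have hnF : (n : F) ≠ 0 := by
    intro hc
    have hd : ringChar F ∣ n := (ringChar.spec F n).mp hc
    rcases hchar with h0 | hlt
    · rw [h0] at hd
      exact absurd (Nat.eq_zero_of_zero_dvd hd) (by omega)
    · exact absurd (Nat.le_of_dvd hn hd) (by omega)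
  have hQk : ∀ k, 1 ≤ k → k ≤ n - 1 → Q.coeff k = 0 :=
    coeffB n hnF Q hQ0 (n - 1) hcoeff
  have hesymm : ∀ k : ℕ, 1 ≤ k → k ≤ n - 1 →
      ∑ t ∈ Finset.univ.powersetCard k, ∏ i ∈ t, a i = 0 := by
    intro k hk1 hk2
    have h0 := hQk k hk1 hk2
    rw [hQcoeff k] at h0
    have hs : ∀ t ∈ Finset.univ.powersetCard k,
        ∏ i ∈ t, -(ξ * a i) = (-ξ) ^ k * ∏ i ∈ t, a i := by
      intro t ht
      have hc : t.card = k := (Finset.mem_powersetCard.mp ht).2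
      calc ∏ i ∈ t, -(ξ * a i) = ∏ i ∈ t, (-ξ) * a i := by
            apply Finset.prod_congr rfl; intro i _; ring
        _ = (∏ _i ∈ t, (-ξ)) * ∏ i ∈ t, a i := Finset.prod_mul_distrib
        _ = (-ξ) ^ k * ∏ i ∈ t, a i := by rw [Finset.prod_const, hc]
    rw [Finset.sum_congr rfl hs, ← Finset.mul_sum] at h0
    have hξk : (-ξ) ^ k ≠ 0 := pow_ne_zero _ (neg_ne_zero.mpr hξ)
    exact (mul_eq_zero.mp h0).resolve_left hξk
  refine ⟨hesymm, ?_⟩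
  have hcard : (Finset.univ : Finset (Fin n)).card = n := by simp
  have hLform : ∏ i, (X - C (a i)) = ∏ i, (X + C (-(a i))) := by
    apply Finset.prod_congr rfl
    intro i _
    rw [map_neg, sub_eq_add_neg]
  have hLcoeff : ∀ m : ℕ, m ≤ n → (∏ i, (X - C (a i))).coeff m =
      (-1) ^ (n - m) * ∑ t ∈ Finset.univ.powersetCard (n - m), ∏ i ∈ t, a i := by
    intro m hm
    rw [hLform, Finset.prod_X_add_C_coeff Finset.univ (fun i => -(a i)) (by rw [hcard]; exact hm),
      hcard]
    rw [Finset.mul_sum]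
    apply Finset.sum_congr rfl
    intro t ht
    have hc : t.card = n - m := (Finset.mem_powersetCard.mp ht).2
    calc ∏ i ∈ t, -(a i) = ∏ i ∈ t, (-1 : F) * a i := by
          apply Finset.prod_congr rfl; intro i _; ring
      _ = (∏ _i ∈ t, (-1 : F)) * ∏ i ∈ t, a i := Finset.prod_mul_distrib
      _ = (-1) ^ (n - m) * ∏ i ∈ t, a i := by rw [Finset.prod_const, hc]
  have hmonic : (∏ i, (X - C (a i)) : F[X]).Monic :=
    monic_prod_of_monic _ _ fun i _ => monic_X_sub_C (a i)
  have hdeg : (∏ i, (X - C (a i)) : F[X]).natDegree = n := by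
    rw [Polynomial.natDegree_prod_of_monic _ _ fun i _ => monic_X_sub_C (a i)]
    simp
  ext m
  rw [Polynomial.coeff_add, Polynomial.coeff_X_pow, Polynomial.coeff_C]
  rcases lt_trichotomy m n with hm | hm | hm
  · rw [if_neg (by omega), zero_add]
    rcases Nat.eq_zero_or_pos m with rfl | hm0
    · rw [if_pos rfl, hLcoeff 0 (le_of_lt hm), Nat.sub_zero]
    · rw [if_neg (by omega), hLcoeff m (le_of_lt hm),
        hesymm (n - m) (by omega) (by omega), mul_zero]
  · subst hm
    rw [if_pos rfl, if_neg (by omega), add_zero]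
    have := hmonic.coeff_natDegree
    rw [hdeg] at this
    exact this
  · rw [if_neg (by omega), if_neg (by omega), add_zero,
      Polynomial.coeff_eq_zero_of_natDegree_lt (by rw [hdeg]; exact hm)]
end

section
/- Let p be a prime and g a primitive root modulo p (a generator of F_p^*). Let A = {g^j : 0 ≤ j ≤ (p-3)/2}. Then A/A = F_p^* \ {-1} = (F_p^* - 1) \ {0}. In particular, the full multiplicative group G = F_p^* admits a ratio set representation (G - 1) \ {0} = A/A. -/
open Finset Pointwise

/-- if `g` is a primitive root mod `p` and
`A = {g^j : 0 ≤ j ≤ (p-3)/2}`, then `A/A = F_p^* \ {-1} = (F_p^* - 1) \ {0}`. -/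
theorem stmt_7 (p : ℕ) [Fact p.Prime] (hodd : Odd p) (g : (ZMod p)ˣ)
    (hg : ∀ x : (ZMod p)ˣ, x ∈ Subgroup.zpowers g) :
    ({x : ZMod p | ∃ j : ℕ, j ≤ (p - 3) / 2 ∧ x = (g : ZMod p) ^ j} /
        {x : ZMod p | ∃ j : ℕ, j ≤ (p - 3) / 2 ∧ x = (g : ZMod p) ^ j}
      = {x : ZMod p | x ≠ 0 ∧ x ≠ -1}) ∧
    ({x : ZMod p | ∃ j : ℕ, j ≤ (p - 3) / 2 ∧ x = (g : ZMod p) ^ j} /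
        {x : ZMod p | ∃ j : ℕ, j ≤ (p - 3) / 2 ∧ x = (g : ZMod p) ^ j}
      = {x : ZMod p | ∃ y : ZMod p, y ≠ 0 ∧ x = y - 1} \ {0}) := by
  have hp : p.Prime := Fact.out
  have hp3 : 3 ≤ p := by
    rcases hodd with ⟨k, hk⟩
    have := hp.two_le
    omega
  set n := (p - 3) / 2 with hn
  have hpn : p = 2 * n + 3 := by
    rcases hodd with ⟨k, hk⟩
    omega
  have hcard : Fintype.card (ZMod p)ˣ = p - 1 := by
    rw [ZMod.card_units_eq_totient, Nat.totient_prime hp]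
  have hord : orderOf g = 2 * n + 2 := by
    rw [orderOf_eq_card_of_forall_mem_zpowers hg, Nat.card_eq_fintype_card, hcard]; omega
  have hgone : g ^ (2 * n + 2) = 1 := by rw [← hord]; exact pow_orderOf_eq_one g
  have hneg : g ^ (n + 1) = -1 := by
    have h2 : g ^ (n + 1) * g ^ (n + 1) = 1 := by
      rw [← pow_add]
      convert hgone using 2
      ring
    have h2' : ((g : ZMod p) ^ (n + 1)) * ((g : ZMod p) ^ (n + 1)) = 1 := by
      have := congrArg (Units.val) h2
      push_cast at this
      exact this
    rcases mul_self_eq_one_iff.mp h2' with h | h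
    · exfalso
      have h' : g ^ (n + 1) = 1 := by
        apply Units.ext; push_cast; exact h
      have hdvd := orderOf_dvd_of_pow_eq_one h'
      rw [hord] at hdvd
      have := Nat.le_of_dvd (by omega) hdvd
      omega
    · apply Units.ext
      push_cast
      exact h
  -- main set equality
  have hmain : ({x : ZMod p | ∃ j : ℕ, j ≤ n ∧ x = (g : ZMod p) ^ j} /
        {x : ZMod p | ∃ j : ℕ, j ≤ n ∧ x = (g : ZMod p) ^ j}
      = {x : ZMod p | x ≠ 0 ∧ x ≠ -1}) := by
    ext x
    simp only [Set.mem_div, Set.mem_setOf_eq]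
    constructor
    · rintro ⟨a, ⟨j, hj, rfl⟩, b, ⟨k, hk, rfl⟩, rfl⟩
      have hb : (g : ZMod p) ^ k ≠ 0 := by
        exact pow_ne_zero _ (Units.ne_zero g)
      constructor
      · exact div_ne_zero (pow_ne_zero _ (Units.ne_zero g)) hb
      · intro hcon
        rw [div_eq_iff hb] at hcon
        have hu : (g : (ZMod p)ˣ) ^ j = -(g ^ k) := by
          apply Units.ext
          push_cast
          rw [hcon]; ring
        rw [show -(g ^ k : (ZMod p)ˣ) = g ^ (n + 1 + k) by
          rw [pow_add, hneg, neg_one_mul]] at hu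
        rw [pow_eq_pow_iff_modEq, hord] at hu
        have h1 : j % (2 * n + 2) = j := Nat.mod_eq_of_lt (by omega)
        have h2 : (n + 1 + k) % (2 * n + 2) = n + 1 + k := Nat.mod_eq_of_lt (by omega)
        unfold Nat.ModEq at hu
        omega
    · rintro ⟨hx0, hx1⟩
      obtain ⟨u, hu⟩ := isUnit_iff_ne_zero.mpr hx0
      obtain ⟨m, hm⟩ := mem_powers_iff_mem_zpowers.mpr (hg u)
      have hm2 : g ^ (m % (2 * n + 2)) = u := by
        rw [← hm, ← hord, pow_mod_orderOf]
      set m0 := m % (2 * n + 2) with hm0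
      have hm0lt : m0 < 2 * n + 2 := Nat.mod_lt _ (by omega)
      rcases le_or_gt m0 n with hle | hgt
      · exact ⟨(g : ZMod p) ^ m0, ⟨m0, hle, rfl⟩, 1, ⟨0, by omega, by simp⟩, by
          rw [div_one, ← hu, ← hm2]; push_cast; ring⟩
      · have hne : m0 ≠ n + 1 := by
          intro hcon
          apply hx1
          rw [← hu, ← hm2, hcon, hneg]
          simp
        have hj : m0 - (n + 2) ≤ n := by omega
        refine ⟨(g : ZMod p) ^ (m0 - (n + 2)), ⟨_, hj, rfl⟩,
          (g : ZMod p) ^ n, ⟨n, le_refl n, rfl⟩, ?_⟩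
        have key : (g : (ZMod p)ˣ) ^ (m0 - (n + 2)) = g ^ m0 * g ^ n := by
          rw [← pow_add]
          rw [pow_eq_pow_iff_modEq, hord]
          have : m0 - (n + 2) + (2 * n + 2) = m0 + n := by omega
          calc m0 - (n + 2) ≡ m0 - (n + 2) + (2 * n + 2) [MOD 2 * n + 2] :=
                (Nat.modEq_iff_dvd' (by omega)).mpr ⟨1, by omega⟩
            _ = m0 + n := this
        rw [div_eq_iff (pow_ne_zero _ (Units.ne_zero g)), ← hu, ← hm2]
        calc ((g : ZMod p) ^ (m0 - (n + 2))) = ((g ^ (m0 - (n + 2)) : (ZMod p)ˣ) : ZMod p) := by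
              push_cast; ring
          _ = ((g ^ m0 * g ^ n : (ZMod p)ˣ) : ZMod p) := by rw [key]
          _ = ((g ^ m0 : (ZMod p)ˣ) : ZMod p) * (g : ZMod p) ^ n := by push_cast; ring
  constructor
  · exact hmain
  · rw [hmain]
    ext x
    simp only [Set.mem_setOf_eq, Set.mem_diff, Set.mem_singleton_iff]
    constructor
    · rintro ⟨hx0, hx1⟩
      exact ⟨⟨x + 1, fun h => hx1 (by linear_combination h), by ring⟩, hx0⟩
    · rintro ⟨⟨y, hy, rfl⟩, h0⟩
      exact ⟨h0, fun h => hy (by linear_combination h)⟩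
end

section
/- Let p be an odd prime, let G be a proper multiplicative subgroup of F_p^* with λ ∈ G, and suppose A, B ⊆ F_p^* with |A|, |B| ≥ 2 satisfy AB = (G - λ) \ {0}. Then |A|·|B| = |G| - 1; in particular |AB| = |A|·|B| and G \ {λ} is the disjoint union of the sets λ + aB over a ∈ A. -/
open Finset Pointwise Polynomial

section StepanovAux

variable {p : ℕ} [Fact p.Prime]

private lemma pow_mem_G (G : Finset (ZMod p)) (hG1 : (1 : ZMod p) ∈ G)
    (hGmul : ∀ x ∈ G, ∀ y ∈ G, x * y ∈ G) {g : ZMod p} (hg : g ∈ G) :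
    ∀ k : ℕ, g ^ k ∈ G := by
  intro k
  induction k with
  | zero => simpa using hG1
  | succ k ih => rw [pow_succ]; exact hGmul _ ih _ hg

private lemma pow_card_G (G : Finset (ZMod p)) (hG0 : (0 : ZMod p) ∉ G)
    (hGmul : ∀ x ∈ G, ∀ y ∈ G, x * y ∈ G) {g : ZMod p} (hg : g ∈ G) :
    g ^ G.card = 1 := by
  have hgne : g ≠ 0 := fun h => hG0 (h ▸ hg)
  have hinj : Function.Injective (fun x : ZMod p => g * x) :=
    fun x y h => by simpa using mul_left_cancel₀ hgne h
  have himg : G.image (fun x => g * x) = G := by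
    apply Finset.eq_of_subset_of_card_le
    · intro y hy
      rcases Finset.mem_image.1 hy with ⟨x, hx, rfl⟩
      exact hGmul _ hg _ hx
    · rw [Finset.card_image_of_injective _ hinj]
  have h1 : ∏ x ∈ G, (g * x) = ∏ x ∈ G, x := by
    conv_rhs => rw [← himg]
    rw [Finset.prod_image (fun x _ y _ h => hinj h)]
  rw [Finset.prod_mul_distrib, Finset.prod_const] at h1
  have hne : ∏ x ∈ G, x ≠ 0 := Finset.prod_ne_zero_iff.2 (fun x hx h => hG0 (h ▸ hx))
  exact mul_right_cancel₀ hne (by simpa using h1)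

private lemma two_card_le (G : Finset (ZMod p)) (hG0 : (0 : ZMod p) ∉ G)
    (hG1 : (1 : ZMod p) ∈ G)
    (hGmul : ∀ x ∈ G, ∀ y ∈ G, x * y ∈ G)
    (hGproper : ∃ x : ZMod p, x ≠ 0 ∧ x ∉ G) :
    2 * G.card ≤ p - 1 := by
  have hpow : ∀ g ∈ G, g ^ G.card = 1 := fun g hg => pow_card_G G hG0 hGmul hg
  obtain ⟨x, hx0, hxG⟩ := hGproper
  set d := G.card with hd
  have hd1 : 1 ≤ d := Finset.card_pos.2 ⟨1, hG1⟩
  have hdisj : Disjoint (G.image (fun g => x * g)) G := by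
    rw [Finset.disjoint_left]
    rintro y hy hyG
    rcases Finset.mem_image.1 hy with ⟨g, hg, rfl⟩
    apply hxG
    have : x * g * g ^ (d - 1) = x := by
      rw [mul_assoc, ← pow_succ']
      have : d - 1 + 1 = d := by omega
      rw [this, hpow g hg, mul_one]
    rw [← this]
    exact hGmul _ hyG _ (pow_mem_G G hG1 hGmul hg (d - 1))
  have hcard : (G.image (fun g => x * g)).card = d := by
    rw [Finset.card_image_of_injective]
    intro a b h
    exact mul_left_cancel₀ hx0 h
  have hsub : (G.image (fun g => x * g)) ∪ G ⊆ (Finset.univ : Finset (ZMod p)).erase 0 := by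
    intro y hy
    rcases Finset.mem_union.1 hy with hy | hy
    · rcases Finset.mem_image.1 hy with ⟨g, hg, rfl⟩
      refine Finset.mem_erase.2 ⟨mul_ne_zero hx0 (fun h => hG0 (h ▸ hg)), Finset.mem_univ _⟩
    · exact Finset.mem_erase.2 ⟨fun h => hG0 (h ▸ hy), Finset.mem_univ _⟩
  have := Finset.card_le_card hsub
  rw [Finset.card_union_of_disjoint hdisj, hcard] at this
  have hcu : ((Finset.univ : Finset (ZMod p)).erase 0).card = p - 1 := by
    rw [Finset.card_erase_of_mem (Finset.mem_univ _), Finset.card_univ, ZMod.card]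
  omega

private lemma choose_ne_zero_mod (N t : ℕ) (hN : N < p) (ht : t ≤ N) :
    (N.choose t : ZMod p) ≠ 0 := by
  rw [Ne, ZMod.natCast_eq_zero_iff]
  intro hdvd
  have h1 : p ∣ N.factorial := by
    have := Nat.choose_mul_factorial_mul_factorial ht
    exact this ▸ (hdvd.mul_right _).mul_right _
  have := (Nat.Prime.dvd_factorial (Fact.out)).1 h1
  omega

private lemma coeff_lin_pow {K : Type*} [Field K] (u v : K) (hv : v ≠ 0) (N t : ℕ)
    (ht : t ≤ N) :
    ((C u + C v * X) ^ N).coeff t = (N.choose t : K) * u ^ (N - t) * v ^ t := by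
  have h : (C u + C v * X : K[X]) = C v * (X + C (u * v⁻¹)) := by
    rw [mul_add, ← C_mul]
    rw [mul_comm v (u * v⁻¹), mul_assoc, inv_mul_cancel₀ hv, mul_one]
    ring
  rw [h, mul_pow, ← C_pow, coeff_C_mul, coeff_X_add_C_pow]
  rw [mul_pow, mul_comm]
  have hvN : v ^ N = v ^ t * v ^ (N - t) := by rw [← pow_add]; congr 1; omega
  have hinv : v ^ (N - t) * v⁻¹ ^ (N - t) = 1 := by rw [← mul_pow, mul_inv_cancel₀ hv, one_pow]
  field_simp [hvN]
  rw [hvN]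
  linear_combination (u ^ (N - t) * v ^ t * (N.choose t : K)) * hinv

private lemma lin_natDegree_le {K : Type*} [Field K] (u v : K) (M : ℕ) :
    ((C u + C v * X : K[X]) ^ M).natDegree ≤ M := by
  refine (natDegree_pow_le).trans ?_
  have h1 : (C u + C v * X : K[X]).natDegree ≤ 1 := by
    refine (natDegree_add_le _ _).trans ?_
    simp only [natDegree_C, max_le_iff]
    exact ⟨Nat.zero_le _, (natDegree_C_mul_le _ _).trans (by simp)⟩
  calc M * (C u + C v * X : K[X]).natDegree ≤ M * 1 := Nat.mul_le_mul_left _ h1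
    _ = M := by omega

private lemma exists_c (B : Finset (ZMod p)) (hB0 : (0 : ZMod p) ∉ B) :
    ∃ c : ZMod p → ZMod p, (∀ b ∈ B, c b ≠ 0) ∧
      ∀ f : (ZMod p)[X], f.degree < B.card → ∑ b ∈ B, c b * f.eval b = f.eval 0 := by
  have hinj : Set.InjOn (id : ZMod p → ZMod p) B := Function.injective_id.injOn
  refine ⟨fun b => (Lagrange.basis B id b).eval 0, ?_, ?_⟩
  · intro b hb
    simp only []
    rw [show Lagrange.basis B id b
        = ∏ j ∈ B.erase b, Lagrange.basisDivisor (id b) (id j) from rfl, eval_prod]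
    rw [Finset.prod_ne_zero_iff]
    intro j hj
    rcases Finset.mem_erase.1 hj with ⟨hjb, hjB⟩
    simp only [Lagrange.basisDivisor, eval_mul, eval_C, eval_sub, eval_X, id]
    apply mul_ne_zero
    · rw [Ne, inv_eq_zero, sub_eq_zero]
      exact fun h => hjb (h.symm)
    · rw [Ne, sub_eq_zero]
      intro h
      exact hB0 (h ▸ hjB)
  · intro f hf
    have h := Lagrange.eq_interpolate hinj hf
    have h2 := congrArg (Polynomial.eval 0) h
    rw [Lagrange.interpolate_apply, eval_finset_sum] at h2
    simp only [eval_mul, eval_C, id] at h2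
    rw [h2]
    exact Finset.sum_congr rfl fun b hb => mul_comm _ _

private lemma stepanov_bound (d : ℕ) (hd1 : 1 ≤ d) (lam : ZMod p) (hlam0 : lam ≠ 0)
    (hlamd : lam ^ d = 1)
    (A B : Finset (ZMod p)) (hA0 : (0 : ZMod p) ∉ A) (hB0 : (0 : ZMod p) ∉ B)
    (hBne : B.Nonempty) (hnd : B.card ≤ d) (hNp : d + (B.card - 1) < p)
    (c : ZMod p → ZMod p) (hc0 : ∀ b ∈ B, c b ≠ 0)
    (hc : ∀ f : (ZMod p)[X], f.degree < B.card → ∑ b ∈ B, c b * f.eval b = f.eval 0)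
    (hmem : ∀ a ∈ A, ∀ b ∈ B, (lam + b * a) ^ d = 1) :
    (A.card + 1) * B.card ≤ d + (B.card - 1) := by
  have hn1 : 1 ≤ B.card := Finset.card_pos.2 hBne
  set n := B.card with hn
  set M := n - 1 with hM
  set N := d + M with hN
  set F : (ZMod p)[X] :=
    ∑ b ∈ B, C (c b) * ((C lam + C b * X) ^ N - (C lam + C b * X) ^ M) with hF
  have hdvd : ∀ a : ZMod p, (∀ b ∈ B, (lam + b * a) ^ d = 1) → (X - C a) ^ n ∣ F := by
    intro a ha
    set Ga := F.comp (X + C a) with hGadef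
    have hGa : Ga = ∑ b ∈ B,
        C (c b) * ((C (lam + b * a) + C b * X) ^ N - (C (lam + b * a) + C b * X) ^ M) := by
      rw [hGadef, hF, Polynomial.sum_comp]
      refine Finset.sum_congr rfl fun b hb => ?_
      simp only [mul_comp, sub_comp, pow_comp, add_comp, C_comp, X_comp, map_add, map_mul]
      ring
    have hcoeff : ∀ t < n, Ga.coeff t = 0 := by
      intro t ht
      have htM : t ≤ M := by omega
      have htN : t ≤ N := by omega
      rw [hGa, finset_sum_coeff]
      have hterm : ∀ b ∈ B,
          (C (c b) * ((C (lam + b * a) + C b * X) ^ N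
            - (C (lam + b * a) + C b * X) ^ M)).coeff t
          = ((N.choose t : ZMod p) - (M.choose t : ZMod p)) *
            (c b * ((X ^ t * (C lam + C a * X) ^ (M - t)).eval b)) := by
        intro b hb
        have hb0 : b ≠ 0 := fun h => hB0 (h ▸ hb)
        rw [coeff_C_mul, coeff_sub, coeff_lin_pow _ _ hb0 N t htN,
          coeff_lin_pow _ _ hb0 M t htM]
        have hNt : N - t = d + (M - t) := by omega
        have hpow : (lam + b * a) ^ (N - t) = (lam + b * a) ^ (M - t) := by
          rw [hNt, pow_add, ha b hb, one_mul]
        rw [hpow]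
        simp only [eval_mul, eval_pow, eval_add, eval_C, eval_X]
        ring
      rw [Finset.sum_congr rfl hterm, ← Finset.mul_sum]
      rcases Nat.eq_zero_or_pos t with rfl | htpos
      · simp
      · have hsum : ∑ b ∈ B, c b * ((X ^ t * (C lam + C a * X) ^ (M - t)).eval b) = 0 := by
          rw [hc _ ?_]
          · simp only [eval_mul, eval_pow, eval_X]
            rw [zero_pow (by omega), zero_mul]
          · have h1 : (X ^ t * (C lam + C a * X) ^ (M - t) : (ZMod p)[X]).natDegree ≤ M := by
              refine (natDegree_mul_le).trans ?_
              have h2 := lin_natDegree_le lam a (M - t)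
              have h3 : (X ^ t : (ZMod p)[X]).natDegree = t := by simp
              omega
            have h4 : (X ^ t * (C lam + C a * X) ^ (M - t) : (ZMod p)[X]).natDegree < n := by
              omega
            refine lt_of_le_of_lt (degree_le_natDegree) ?_
            rw [hn] at h4
            exact_mod_cast Nat.cast_lt.2 h4
        rw [hsum, mul_zero]
    obtain ⟨q, hq⟩ := (X_pow_dvd_iff).2 hcoeff
    refine ⟨q.comp (X - C a), ?_⟩
    have hFcomp : F = Ga.comp (X - C a) := by
      rw [hGadef, comp_assoc]
      have : (X + C a).comp (X - C a) = (X : (ZMod p)[X]) := by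
        simp [add_comp, sub_comp]
      rw [this, comp_X]
    rw [hFcomp, hq]
    simp [mul_comp, pow_comp, sub_comp]
  have hF0 : F ≠ 0 := by
    intro h0
    have hcn : F.coeff n = 0 := by rw [h0]; simp
    have hcoeffn : F.coeff n
        = (N.choose n : ZMod p) * lam ^ (N - n) * ∑ b ∈ B, c b * b ^ n := by
      rw [hF, finset_sum_coeff, Finset.mul_sum]
      refine Finset.sum_congr rfl fun b hb => ?_
      have hb0 : b ≠ 0 := fun h => hB0 (h ▸ hb)
      rw [coeff_C_mul, coeff_sub, coeff_lin_pow _ _ hb0 N n (by omega),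
        coeff_eq_zero_of_natDegree_lt (lt_of_le_of_lt (lin_natDegree_le lam b M) (by omega))]
      ring
    have hchoose : (N.choose n : ZMod p) ≠ 0 := choose_ne_zero_mod N n hNp (by omega)
    have hlamp : lam ^ (N - n) ≠ 0 := pow_ne_zero _ hlam0
    have hsn : ∑ b ∈ B, c b * b ^ n = 0 := by
      have := hcn
      rw [hcoeffn] at this
      rcases mul_eq_zero.1 this with h | h
      · exact absurd h (mul_ne_zero hchoose hlamp)
      · exact h
    obtain ⟨b₀, hb₀⟩ := hBne
    set r : (ZMod p)[X] := X * ∏ b' ∈ B.erase b₀, (X - C b') with hr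
    have hrmonic : r.Monic := monic_X.mul (monic_prod_of_monic _ _ fun _ _ => monic_X_sub_C _)
    have hrdeg : r.natDegree = n := by
      rw [hr, natDegree_mul X_ne_zero (monic_prod_of_monic _ _
        fun _ _ => monic_X_sub_C _).ne_zero, natDegree_X,
        natDegree_prod _ _ (fun b' _ => X_sub_C_ne_zero b')]
      simp only [natDegree_X_sub_C]
      rw [Finset.sum_const, Finset.card_erase_of_mem hb₀, smul_eq_mul, mul_one]
      omega
    have hr0 : r.eval 0 = 0 := by simp [hr]
    have hrb : ∀ b ∈ B, b ≠ b₀ → r.eval b = 0 := by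
      intro b hb hne
      rw [hr, eval_mul, eval_prod]
      have : ∏ b' ∈ B.erase b₀, (b - b') = 0 :=
        Finset.prod_eq_zero (Finset.mem_erase.2 ⟨hne, hb⟩) (by simp)
      simp only [eval_sub, eval_X, eval_C]
      rw [this, mul_zero]
    have hrb₀ : r.eval b₀ ≠ 0 := by
      rw [hr, eval_mul, eval_prod]
      have hb₀0 : b₀ ≠ 0 := fun h => hB0 (h ▸ hb₀)
      refine mul_ne_zero (by simpa using hb₀0) ?_
      rw [Finset.prod_ne_zero_iff]
      intro b' hb'
      simp only [eval_sub, eval_X, eval_C, Ne, sub_eq_zero]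
      exact fun h => (Finset.mem_erase.1 hb').1 h.symm
    have hsum1 : ∑ b ∈ B, c b * r.eval b = c b₀ * r.eval b₀ :=
      Finset.sum_eq_single_of_mem b₀ hb₀ (fun b hb hne => by rw [hrb b hb hne, mul_zero])
    set r₁ := r - X ^ n with hr₁
    have hdeg₁ : r₁.degree < (n : ℕ) := by
      rw [hr₁]
      have h1 : r.degree = ((X : (ZMod p)[X]) ^ n).degree := by
        rw [degree_X_pow, degree_eq_natDegree hrmonic.ne_zero, hrdeg]
      refine lt_of_lt_of_le (degree_sub_lt h1 hrmonic.ne_zero ?_) ?_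
      · rw [hrmonic.leadingCoeff, (monic_X_pow n).leadingCoeff]
      · rw [degree_eq_natDegree hrmonic.ne_zero, hrdeg]
    have hsum2 : ∑ b ∈ B, c b * r.eval b = 0 := by
      have hre : ∀ b, r.eval b = r₁.eval b + b ^ n := by
        intro b
        rw [hr₁, eval_sub, eval_pow, eval_X, sub_add_cancel]
      calc ∑ b ∈ B, c b * r.eval b
          = ∑ b ∈ B, (c b * r₁.eval b + c b * b ^ n) := by
            refine Finset.sum_congr rfl fun b _ => ?_
            rw [hre, mul_add]
        _ = (∑ b ∈ B, c b * r₁.eval b) + ∑ b ∈ B, c b * b ^ n := Finset.sum_add_distrib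
        _ = r₁.eval 0 + 0 := by rw [hc r₁ hdeg₁, hsn]
        _ = 0 := by
            rw [hr₁, eval_sub, eval_pow, eval_X, hr0, zero_pow (by omega), sub_zero, add_zero]
    rw [hsum1] at hsum2
    exact (mul_ne_zero (hc0 b₀ hb₀) hrb₀) hsum2
  have hdvdall : ∀ a ∈ insert (0 : ZMod p) A, (X - C a) ^ n ∣ F := by
    intro a ha
    rcases Finset.mem_insert.1 ha with rfl | haA
    · exact hdvd 0 (fun b hb => by simpa using hlamd)
    · exact hdvd a (hmem a haA)
  have hcop : (↑(insert (0 : ZMod p) A) : Set (ZMod p)).Pairwise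
      (Function.onFun IsCoprime fun a => ((X : (ZMod p)[X]) - C a) ^ n) := by
    intro a _ a' _ hne
    exact (isCoprime_X_sub_C_of_isUnit_sub (isUnit_iff_ne_zero.2 (sub_ne_zero.2 hne))).pow
  have hprod : (∏ a ∈ insert (0 : ZMod p) A, ((X : (ZMod p)[X]) - C a) ^ n) ∣ F :=
    Finset.prod_dvd_of_coprime hcop hdvdall
  have hdegF : F.natDegree ≤ N := by
    rw [hF]
    refine natDegree_sum_le_of_forall_le _ _ fun b hb => ?_
    refine (natDegree_C_mul_le _ _).trans ?_
    refine (natDegree_sub_le _ _).trans ?_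
    have h1 := lin_natDegree_le lam b N
    have h2 := lin_natDegree_le lam b M
    omega
  have hdegprod : (∏ a ∈ insert (0 : ZMod p) A, ((X : (ZMod p)[X]) - C a) ^ n).natDegree
      = (A.card + 1) * n := by
    rw [natDegree_prod _ _ (fun a _ => pow_ne_zero _ (X_sub_C_ne_zero a))]
    simp only [natDegree_pow, natDegree_X_sub_C, mul_one]
    rw [Finset.sum_const, Finset.card_insert_of_notMem hA0, smul_eq_mul]
  have := natDegree_le_of_dvd hprod hF0
  omega

end StepanovAux

/-- if `G ⊊ F_p^*` is a multiplicative subgroup, `λ ∈ G`, and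
`A, B ⊆ F_p^*` with `|A|,|B| ≥ 2` satisfy `AB = (G - λ) \ {0}`, then
`|A||B| = |G| - 1`; in particular `|AB| = |A||B|` and `G \ {λ}` is the
disjoint union of the translates `λ + aB`, `a ∈ A`. -/
theorem stmt_8 (p : ℕ) [Fact p.Prime] (hodd : Odd p)
    (G : Finset (ZMod p)) (hG0 : (0 : ZMod p) ∉ G) (hG1 : (1 : ZMod p) ∈ G)
    (hGmul : ∀ x ∈ G, ∀ y ∈ G, x * y ∈ G)
    (hGproper : ∃ x : ZMod p, x ≠ 0 ∧ x ∉ G)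
    (lam : ZMod p) (hlam : lam ∈ G)
    (A B : Finset (ZMod p)) (hA0 : (0 : ZMod p) ∉ A) (hB0 : (0 : ZMod p) ∉ B)
    (hA : 2 ≤ A.card) (hB : 2 ≤ B.card)
    (hAB : A * B = (G.image (fun g => g - lam)) \ {0}) :
    A.card * B.card = G.card - 1 ∧
    (A * B).card = A.card * B.card ∧
    (∀ a₁ ∈ A, ∀ a₂ ∈ A, a₁ ≠ a₂ →
      Disjoint (B.image (fun b => lam + a₁ * b)) (B.image (fun b => lam + a₂ * b))) ∧
    A.biUnion (fun a => B.image (fun b => lam + a * b)) = G.erase lam := by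
  have hlam0 : lam ≠ 0 := fun h => hG0 (h ▸ hlam)
  have hd1 : 1 ≤ G.card := Finset.card_pos.2 ⟨1, hG1⟩
  have hpow : ∀ g ∈ G, g ^ G.card = 1 := fun g hg => pow_card_G G hG0 hGmul hg
  have h2d : 2 * G.card ≤ p - 1 := two_card_le G hG0 hG1 hGmul hGproper
  -- cardinality of the right-hand side
  have himg : (G.image (fun g => g - lam)).card = G.card :=
    Finset.card_image_of_injective _ (sub_left_injective)
  have h0mem : (0 : ZMod p) ∈ G.image (fun g => g - lam) :=
    Finset.mem_image.2 ⟨lam, hlam, sub_self lam⟩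
  have hCcard : ((G.image (fun g => g - lam)) \ {0}).card = G.card - 1 := by
    rw [Finset.card_sdiff_of_subset (by simpa using h0mem), himg, Finset.card_singleton]
  have hABcard : (A * B).card = G.card - 1 := by rw [hAB, hCcard]
  -- B is not too big
  have hBd : B.card ≤ G.card - 1 := by
    obtain ⟨a₀, ha₀⟩ := Finset.card_pos.1 (by omega : 0 < A.card)
    have hsub : B.image (fun b => a₀ * b) ⊆ A * B := by
      intro x hx
      rcases Finset.mem_image.1 hx with ⟨b, hb, rfl⟩
      exact Finset.mul_mem_mul ha₀ hb
    have := Finset.card_le_card hsub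
    rw [Finset.card_image_of_injective _ (mul_right_injective₀
      (fun h => hA0 (h ▸ ha₀)))] at this
    omega
  -- the key membership property
  have hmem : ∀ a ∈ A, ∀ b ∈ B, (lam + b * a) ^ G.card = 1 := by
    intro a ha b hb
    have hmemAB : a * b ∈ A * B := Finset.mul_mem_mul ha hb
    rw [hAB, Finset.mem_sdiff] at hmemAB
    rcases Finset.mem_image.1 hmemAB.1 with ⟨g, hg, hgab⟩
    have : lam + b * a = g := by rw [mul_comm b a, ← hgab]; ring
    rw [this]
    exact hpow g hg
  -- lower bound
  have hlow : G.card - 1 ≤ A.card * B.card := by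
    calc G.card - 1 = (A * B).card := hABcard.symm
      _ ≤ A.card * B.card := Finset.card_mul_le
  -- upper bound via Stepanov
  have hup : A.card * B.card ≤ G.card - 1 := by
    obtain ⟨c, hc0, hc⟩ := exists_c B hB0
    have hkey := stepanov_bound G.card hd1 lam hlam0 (hpow lam hlam) A B hA0 hB0
      (Finset.card_pos.1 (by omega : 0 < B.card))
      (by omega) (by omega) c hc0 hc hmem
    have hn1 : 1 ≤ B.card := by omega
    have hexp : (A.card + 1) * B.card = A.card * B.card + B.card := by ring
    omega
  have hmain : A.card * B.card = G.card - 1 := le_antisymm hup hlow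
  have hcard2 : (A * B).card = A.card * B.card := by rw [hABcard, hmain]
  -- injectivity of multiplication on A ×ˢ B
  have hinj : Set.InjOn (fun q : ZMod p × ZMod p => q.1 * q.2) ↑(A ×ˢ B) := by
    rw [← Finset.card_image_iff]
    rw [← Finset.mul_def, hcard2, Finset.card_product]
  refine ⟨hmain, hcard2, ?_, ?_⟩
  · intro a₁ ha₁ a₂ ha₂ hne
    rw [Finset.disjoint_left]
    rintro x hx₁ hx₂
    rcases Finset.mem_image.1 hx₁ with ⟨b₁, hb₁, he₁⟩
    rcases Finset.mem_image.1 hx₂ with ⟨b₂, hb₂, he₂⟩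
    have heq : a₁ * b₁ = a₂ * b₂ := by
      have := he₁.trans he₂.symm
      exact add_left_cancel this
    have := hinj (Finset.mem_coe.2 (Finset.mem_product.2 ⟨ha₁, hb₁⟩))
      (Finset.mem_coe.2 (Finset.mem_product.2 ⟨ha₂, hb₂⟩))
      (show (a₁, b₁).1 * (a₁, b₁).2 = (a₂, b₂).1 * (a₂, b₂).2 from heq)
    exact hne (congrArg Prod.fst this)
  · ext x
    simp only [Finset.mem_biUnion, Finset.mem_image, Finset.mem_erase]
    constructor
    · rintro ⟨a, ha, b, hb, rfl⟩
      have hmemAB : a * b ∈ A * B := Finset.mul_mem_mul ha hb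
      rw [hAB, Finset.mem_sdiff] at hmemAB
      rcases Finset.mem_image.1 hmemAB.1 with ⟨g, hg, hgab⟩
      have hab0 : a * b ≠ 0 := by simpa using hmemAB.2
      have hxg : lam + a * b = g := by rw [← hgab]; ring
      constructor
      · intro h
        apply hab0
        have : lam + a * b = lam + 0 := by rw [h, add_zero]
        exact add_left_cancel this
      · rw [hxg]; exact hg
    · rintro ⟨hxlam, hxG⟩
      have hmemC : x - lam ∈ A * B := by
        rw [hAB, Finset.mem_sdiff]
        refine ⟨Finset.mem_image.2 ⟨x, hxG, rfl⟩, ?_⟩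
        simpa using sub_ne_zero.2 hxlam
      rcases Finset.mem_mul.1 hmemC with ⟨a, ha, b, hb, hab⟩
      exact ⟨a, ha, b, hb, by rw [hab]; ring⟩
end

section
/- Let n ≥ 2, let ω = e^{2πi/n}, and set x_k = ω^k - 1 for 1 ≤ k ≤ n-1. If x_k x_ℓ = x_m x_r for some indices 1 ≤ k, ℓ, m, r ≤ n-1, then {k, ℓ} = {m, r} as unordered pairs. -/
open Complex

lemma aux_factor (n : ℕ) (hn : 0 < n) (t : ℕ) :
    Complex.exp (2 * Real.pi * Complex.I / n) ^ t - 1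
      = Complex.exp ((Real.pi * t / n : ℝ) * Complex.I) *
        (2 * ((Real.sin (Real.pi * t / n) : ℝ) : ℂ) * Complex.I) := by
  have hn' : (n : ℂ) ≠ 0 := by exact_mod_cast hn.ne'
  set θ : ℝ := Real.pi * t / n with hθ
  have h1 : Complex.exp (2 * Real.pi * Complex.I / n) ^ t
      = Complex.exp ((θ : ℂ) * I) * Complex.exp ((θ : ℂ) * I) := by
    rw [← Complex.exp_nat_mul, ← Complex.exp_add]
    congr 1
    rw [hθ]; push_cast; field_simp; ring
  have h2 : 2 * ((Real.sin θ : ℝ) : ℂ) * I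
      = Complex.exp ((θ : ℂ) * I) - Complex.exp (((-θ : ℝ) : ℂ) * I) := by
    rw [Complex.exp_mul_I, Complex.exp_mul_I]
    push_cast
    rw [Complex.sin_neg, Complex.cos_neg]
    ring
  have h3 : Complex.exp ((θ : ℂ) * I) * Complex.exp (((-θ : ℝ) : ℂ) * I) = 1 := by
    rw [← Complex.exp_add]
    push_cast
    norm_num
  rw [h1, h2]
  linear_combination h3

/-- with `ω = e^{2πi/n}` and `x_k = ω^k - 1`, if
`x_k x_ℓ = x_m x_r` for `1 ≤ k,ℓ,m,r ≤ n-1` then `{k,ℓ} = {m,r}`. -/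
theorem stmt_12 (n : ℕ) (hn : 2 ≤ n) (k l m r : ℕ)
    (hk1 : 1 ≤ k) (hk2 : k ≤ n - 1) (hl1 : 1 ≤ l) (hl2 : l ≤ n - 1)
    (hm1 : 1 ≤ m) (hm2 : m ≤ n - 1) (hr1 : 1 ≤ r) (hr2 : r ≤ n - 1)
    (h : (Complex.exp (2 * Real.pi * Complex.I / n) ^ k - 1) *
          (Complex.exp (2 * Real.pi * Complex.I / n) ^ l - 1) =
        (Complex.exp (2 * Real.pi * Complex.I / n) ^ m - 1) *
          (Complex.exp (2 * Real.pi * Complex.I / n) ^ r - 1)) :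
    (k = m ∧ l = r) ∨ (k = r ∧ l = m) := by
  have hn0 : 0 < n := by omega
  have hnR : (0:ℝ) < n := by exact_mod_cast hn0
  have hn' : (n:ℝ) ≠ 0 := hnR.ne'
  have hπ := Real.pi_pos
  rw [aux_factor n hn0 k, aux_factor n hn0 l, aux_factor n hn0 m, aux_factor n hn0 r] at h
  set α : ℝ := Real.pi * k / n with hα
  set β : ℝ := Real.pi * l / n with hβ
  set γ : ℝ := Real.pi * m / n with hγ
  set δ : ℝ := Real.pi * r / n with hδ
  -- sines are positive
  have hs : ∀ t : ℕ, 1 ≤ t → t ≤ n - 1 → 0 < Real.sin (Real.pi * t / n) := by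
    intro t ht1 ht2
    apply Real.sin_pos_of_pos_of_lt_pi
    · have : (0:ℝ) < t := by exact_mod_cast ht1
      positivity
    · rw [div_lt_iff₀ hnR]
      have : (t:ℝ) < n := by exact_mod_cast (by omega : t < n)
      exact mul_lt_mul_of_pos_left this hπ
  have hsα := hs k hk1 hk2
  have hsβ := hs l hl1 hl2
  have hsγ := hs m hm1 hm2
  have hsδ := hs r hr1 hr2
  -- key equation
  have key : Complex.exp (((α + β : ℝ) : ℂ) * I) * ((Real.sin α * Real.sin β : ℝ) : ℂ)
      = Complex.exp (((γ + δ : ℝ) : ℂ) * I) * ((Real.sin γ * Real.sin δ : ℝ) : ℂ) := by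
    have e1 : Complex.exp (((α + β : ℝ) : ℂ) * I)
        = Complex.exp ((α : ℂ) * I) * Complex.exp ((β : ℂ) * I) := by
      rw [← Complex.exp_add]; congr 1; push_cast; ring
    have e2 : Complex.exp (((γ + δ : ℝ) : ℂ) * I)
        = Complex.exp ((γ : ℂ) * I) * Complex.exp ((δ : ℂ) * I) := by
      rw [← Complex.exp_add]; congr 1; push_cast; ring
    rw [e1, e2]
    simp only [Complex.ofReal_mul]
    linear_combination (-(1:ℂ)/4) * h +
      (((Real.sin α : ℝ) : ℂ) * ((Real.sin β : ℝ) : ℂ) * Complex.exp ((α : ℂ) * I) * Complex.exp ((β : ℂ) * I)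
        - ((Real.sin γ : ℝ) : ℂ) * ((Real.sin δ : ℝ) : ℂ) * Complex.exp ((γ : ℂ) * I) * Complex.exp ((δ : ℂ) * I))
        * Complex.I_mul_I
  -- equal moduli
  have habs : Real.sin α * Real.sin β = Real.sin γ * Real.sin δ := by
    have := congrArg (fun z : ℂ => ‖z‖) key
    simp only [norm_mul, Complex.norm_exp_ofReal_mul_I, one_mul, Complex.norm_real, Real.norm_eq_abs] at this
    rwa [abs_of_pos (by positivity), abs_of_pos (by positivity), abs_of_pos (show 0 < Real.sin γ from hsγ),
      abs_of_pos (show 0 < Real.sin δ from hsδ)] at this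
  -- equal phases
  have hexp : Complex.exp (((α + β : ℝ) : ℂ) * I) = Complex.exp (((γ + δ : ℝ) : ℂ) * I) := by
    have hne : ((Real.sin γ * Real.sin δ : ℝ) : ℂ) ≠ 0 := by
      exact_mod_cast (by positivity : (Real.sin γ * Real.sin δ : ℝ) ≠ 0)
    rw [habs] at key
    exact mul_right_cancel₀ hne key
  obtain ⟨z, hz⟩ := Complex.exp_eq_exp_iff_exists_int.mp hexp
  have hz' : ((α + β : ℝ) : ℂ) = ((γ + δ : ℝ) : ℂ) + (z : ℂ) * (2 * (Real.pi : ℂ)) := by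
    apply mul_right_cancel₀ Complex.I_ne_zero
    linear_combination hz
  have hzR : α + β = γ + δ + z * (2 * Real.pi) := by exact_mod_cast hz'
  -- convert to an integer equation on the sums
  have hsumZ : (k : ℤ) + l = m + r + 2 * n * z := by
    have hR : (k : ℝ) + l = m + r + 2 * n * z := by
      rw [hα, hβ, hγ, hδ] at hzR
      field_simp at hzR
      have h2 : Real.pi * ((k:ℝ) + l) = Real.pi * ((m:ℝ) + r + 2 * n * z) := by
        linear_combination Real.pi * hzR
      exact mul_left_cancel₀ hπ.ne' h2
    exact_mod_cast hR
  have hb : (1:ℤ) ≤ k ∧ (k:ℤ) ≤ n - 1 ∧ (1:ℤ) ≤ l ∧ (l:ℤ) ≤ n - 1 ∧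
      (1:ℤ) ≤ m ∧ (m:ℤ) ≤ n - 1 ∧ (1:ℤ) ≤ r ∧ (r:ℤ) ≤ n - 1 ∧ (2:ℤ) ≤ n := by
    omega
  obtain ⟨b1, b2, b3, b4, b5, b6, b7, b8, b9⟩ := hb
  have hz0 : z = 0 := by
    rcases lt_trichotomy z 0 with h' | h' | h'
    · exfalso
      have h1 : z ≤ -1 := by omega
      have h2 : 2 * (n:ℤ) * z ≤ 2 * n * (-1) :=
        mul_le_mul_of_nonneg_left h1 (by linarith)
      linarith
    · exact h'
    · exfalso
      have h1 : (1:ℤ) ≤ z := by omega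
      have h2 : 2 * (n:ℤ) * 1 ≤ 2 * n * z :=
        mul_le_mul_of_nonneg_left h1 (by linarith)
      linarith
  have hsum : k + l = m + r := by
    rw [hz0] at hsumZ
    omega
  -- now the cosine argument
  have hsumR : α + β = γ + δ := by
    rw [hα, hβ, hγ, hδ]
    have hkl : (k : ℝ) + l = m + r := by exact_mod_cast hsum
    field_simp
    linear_combination hkl
  have hcos : Real.cos (α - β) = Real.cos (γ - δ) := by
    have hsum' : Real.cos (α + β) = Real.cos (γ + δ) := by rw [hsumR]
    linear_combination Real.cos_sub α β - Real.cos_sub γ δ - Real.cos_add α β +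
      Real.cos_add γ δ + hsum' + 2 * habs
  -- bounds on the angles
  have hrange : ∀ t : ℕ, 1 ≤ t → t ≤ n - 1 → 0 < Real.pi * t / n ∧ Real.pi * t / n < Real.pi := by
    intro t ht1 ht2
    constructor
    · have : (0:ℝ) < t := by exact_mod_cast ht1
      positivity
    · rw [div_lt_iff₀ hnR]
      have : (t:ℝ) < n := by exact_mod_cast (by omega : t < n)
      exact mul_lt_mul_of_pos_left this hπ
  obtain ⟨hα1, hα2⟩ := hrange k hk1 hk2
  obtain ⟨hβ1, hβ2⟩ := hrange l hl1 hl2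
  obtain ⟨hγ1, hγ2⟩ := hrange m hm1 hm2
  obtain ⟨hδ1, hδ2⟩ := hrange r hr1 hr2
  have habs_eq : |α - β| = |γ - δ| := by
    apply Real.injOn_cos
    · exact ⟨abs_nonneg _, by rw [abs_le]; constructor <;> [linarith; linarith]⟩
    · exact ⟨abs_nonneg _, by rw [abs_le]; constructor <;> [linarith; linarith]⟩
    · rw [Real.cos_abs, Real.cos_abs]; exact hcos
  have hdiff : |(k:ℝ) - l| = |(m:ℝ) - r| := by
    have e1 : α - β = (Real.pi / n) * ((k:ℝ) - l) := by rw [hα, hβ]; field_simp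
    have e2 : γ - δ = (Real.pi / n) * ((m:ℝ) - r) := by rw [hγ, hδ]; field_simp
    rw [e1, e2, abs_mul, abs_mul, abs_of_pos (by positivity : (0:ℝ) < Real.pi / n)] at habs_eq
    exact mul_left_cancel₀ (by positivity : (Real.pi / n : ℝ) ≠ 0) habs_eq
  rcases abs_eq_abs.mp hdiff with hd | hd
  · left
    have : (k:ℤ) - l = m - r := by exact_mod_cast hd
    omega
  · right
    have : (k:ℤ) - l = -(m - r) := by exact_mod_cast hd
    omega
end

section
/- Let G be a finite subgroup of the unit circle S^1 ⊂ ℂ^* and let λ ∈ G. Then there do not exist sets A, B ⊆ ℂ^* with |A| ≥ 2 and |B| ≥ 2 such that AB = (G - λ) \ {0}. -/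
open Pointwise

/-- if `G` is a finite subgroup of the unit circle and `λ ∈ G`,
then `(G - λ) \ {0}` is not a nontrivial product set `AB`. -/
theorem stmt_13 (G : Set ℂ) (hGfin : G.Finite) (hG1 : (1 : ℂ) ∈ G)
    (hGmul : ∀ x ∈ G, ∀ y ∈ G, x * y ∈ G)
    (hGcirc : ∀ z ∈ G, ‖z‖ = 1)
    (lam : ℂ) (hlam : lam ∈ G) :
    ¬ ∃ A B : Set ℂ, (0 : ℂ) ∉ A ∧ (0 : ℂ) ∉ B ∧
        2 ≤ A.encard ∧ 2 ≤ B.encard ∧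
        A * B = {z : ℂ | ∃ g ∈ G, z = g - lam} \ {0} := by
  rintro ⟨A, B, hA0, hB0, hA2, hB2, hAB⟩
  obtain ⟨a₁, a₂, ha₁, ha₂, hane⟩ :=
    Set.one_lt_encard_iff.mp (lt_of_lt_of_le (by norm_num) hA2)
  obtain ⟨b₁, b₂, hb₁, hb₂, hbne⟩ :=
    Set.one_lt_encard_iff.mp (lt_of_lt_of_le (by norm_num) hB2)
  have ha₁0 : a₁ ≠ 0 := fun h => hA0 (h ▸ ha₁)
  have ha₂0 : a₂ ≠ 0 := fun h => hA0 (h ▸ ha₂)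
  have hb₁0 : b₁ ≠ 0 := fun h => hB0 (h ▸ hb₁)
  have hb₂0 : b₂ ≠ 0 := fun h => hB0 (h ▸ hb₂)
  have hlam1 : lam * (starRingEnd ℂ) lam = 1 := by
    rw [Complex.mul_conj, Complex.normSq_eq_norm_sq, hGcirc lam hlam]
    norm_num
  -- every product `a*b` lies on the circle `|z + lam| = 1`
  have key : ∀ a ∈ A, ∀ b ∈ B,
      a * b * ((starRingEnd ℂ) a * (starRingEnd ℂ) b)
        + a * b * (starRingEnd ℂ) lam
        + lam * ((starRingEnd ℂ) a * (starRingEnd ℂ) b) = 0 := by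
    intro a ha b hb
    have hmem : a * b ∈ A * B := Set.mul_mem_mul ha hb
    rw [hAB] at hmem
    obtain ⟨⟨g, hg, hgeq⟩, -⟩ := hmem
    have hg1 : g * (starRingEnd ℂ) g = 1 := by
      rw [Complex.mul_conj, Complex.normSq_eq_norm_sq, hGcirc g hg]
      norm_num
    have hconj : (starRingEnd ℂ) a * (starRingEnd ℂ) b
        = (starRingEnd ℂ) g - (starRingEnd ℂ) lam := by
      rw [← map_mul, hgeq, map_sub]
    rw [hgeq, hconj]
    linear_combination hg1 - hlam1
  -- the coefficient of the line through the origin containing B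
  set c : ℂ := (starRingEnd ℂ) lam * a₁ * a₂ * ((starRingEnd ℂ) a₂ - (starRingEnd ℂ) a₁)
    with hc_def
  have hlam0 : lam ≠ 0 := by
    intro h
    rw [h] at hlam1
    simp at hlam1
  have hinj := (starRingEnd ℂ).injective
  have hc0 : c ≠ 0 := by
    have h1 : (starRingEnd ℂ) lam ≠ 0 :=
      fun h => hlam0 (hinj (h.trans (map_zero _).symm))
    have h2 : (starRingEnd ℂ) a₂ - (starRingEnd ℂ) a₁ ≠ 0 := by
      rw [sub_ne_zero]
      exact fun h => hane (hinj h).symm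
    exact mul_ne_zero (mul_ne_zero (mul_ne_zero h1 ha₁0) ha₂0) h2
  have hconjc : (starRingEnd ℂ) c
      = lam * (starRingEnd ℂ) a₁ * (starRingEnd ℂ) a₂ * (a₂ - a₁) := by
    simp only [hc_def, map_mul, map_sub, Complex.conj_conj]
  -- every b ∈ B lies on the line Re(c*b) = 0
  have hline : ∀ b ∈ B, (c * b).re = 0 := by
    intro b hb
    have E1 := key a₁ ha₁ b hb
    have E2 := key a₂ ha₂ b hb
    have h : c * b + (starRingEnd ℂ) c * (starRingEnd ℂ) b = 0 := by
      rw [hconjc, hc_def]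
      linear_combination (a₂ * (starRingEnd ℂ) a₂) * E1
        - (a₁ * (starRingEnd ℂ) a₁) * E2
    have h2 : c * b + (starRingEnd ℂ) (c * b) = 0 := by
      rw [map_mul]; exact h
    rw [Complex.add_conj] at h2
    have := congrArg Complex.re h2
    simpa using this
  have h1re : (c * b₁).re = 0 := hline b₁ hb₁
  have h2re : (c * b₂).re = 0 := hline b₂ hb₂
  have hcb₁ : c * b₁ ≠ 0 := mul_ne_zero hc0 hb₁0
  have him1 : (c * b₁).im ≠ 0 := by
    intro h
    exact hcb₁ (Complex.ext h1re (by rw [h, Complex.zero_im]))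
  set r : ℝ := (c * b₂).im / (c * b₁).im with hr_def
  have hb₂eq : b₂ = (r : ℂ) * b₁ := by
    have : c * b₂ = (r : ℂ) * (c * b₁) := by
      apply Complex.ext
      · rw [Complex.re_ofReal_mul, h1re, h2re, mul_zero]
      · rw [Complex.im_ofReal_mul, hr_def]
        exact (div_mul_cancel₀ _ him1).symm
    have h' : c * b₂ = c * ((r : ℂ) * b₁) := by rw [this]; ring
    exact mul_left_cancel₀ hc0 h'
  have hconjb₂ : (starRingEnd ℂ) b₂ = (r : ℂ) * (starRingEnd ℂ) b₁ := by
    rw [hb₂eq, map_mul, Complex.conj_ofReal]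
  have E11 := key a₁ ha₁ b₁ hb₁
  have E12 := key a₁ ha₁ b₂ hb₂
  rw [hb₂eq] at E12
  simp only [map_mul, Complex.conj_ofReal] at E12
  have hq : a₁ * b₁ * ((starRingEnd ℂ) a₁ * (starRingEnd ℂ) b₁) ≠ 0 := by
    have hca₁ : (starRingEnd ℂ) a₁ ≠ 0 :=
      fun h => ha₁0 (hinj (h.trans (map_zero _).symm))
    have hcb₁' : (starRingEnd ℂ) b₁ ≠ 0 :=
      fun h => hb₁0 (hinj (h.trans (map_zero _).symm))
    exact mul_ne_zero (mul_ne_zero ha₁0 hb₁0) (mul_ne_zero hca₁ hcb₁')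
  have hkey : ((r : ℂ) ^ 2 - (r : ℂ)) *
      (a₁ * b₁ * ((starRingEnd ℂ) a₁ * (starRingEnd ℂ) b₁)) = 0 := by
    linear_combination E12 - (r : ℂ) * E11
  rcases mul_eq_zero.mp hkey with h | h
  · have : (r : ℂ) * ((r : ℂ) - 1) = 0 := by linear_combination h
    rcases mul_eq_zero.mp this with h' | h'
    · exact hb₂0 (by rw [hb₂eq, h', zero_mul])
    · have hr1 : (r : ℂ) = 1 := sub_eq_zero.mp h'
      have hbb : b₂ = b₁ := by rw [hb₂eq, hr1, one_mul]
      exact hbne hbb.symm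
  · exact hq h
end

section
/- Let m ≥ 3 and let G ⊂ S^1 be the group of m-th roots of unity. If ψ is a Möbius transformation of the Riemann sphere satisfying ψ(S^1) = S^1 and ψ(G) = G, then there exists ζ ∈ G such that ψ(z) = ζz for all z, or ψ(z) = ζ/z for all z. -/
open Polynomial

lemma coeff_lin_pow_s15 (a b : ℂ) (m k : ℕ) (hk : k ≤ m) :
    ((C a * X + C b) ^ m).coeff k = (m.choose k : ℂ) * a ^ k * b ^ (m - k) := by
  rw [add_pow, finset_sum_coeff]
  have h : ∀ i ∈ Finset.range (m + 1),
      ((C a * X) ^ i * C b ^ (m - i) * ((m.choose i : ℕ) : ℂ[X])).coeff k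
        = if i = k then (m.choose k : ℂ) * a ^ k * b ^ (m - k) else 0 := by
    intro i _
    have : (C a * X) ^ i * C b ^ (m - i) * ((m.choose i : ℕ) : ℂ[X])
        = C (a ^ i * b ^ (m - i) * (m.choose i : ℂ)) * X ^ i := by
      rw [mul_pow, ← C_pow, ← C_pow, ← C_eq_natCast, mul_right_comm, mul_assoc, ← C_mul, mul_right_comm, ← C_mul]
      ring_nf
    rw [this, coeff_C_mul, coeff_X_pow]
    by_cases h : i = k
    · subst h; simp; ring
    · simp [h, Ne.symm h]
  rw [Finset.sum_congr rfl h, Finset.sum_ite_eq' (Finset.range (m+1)) k]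
  simp [Nat.lt_succ_iff, hk]

lemma key_alg (m : ℕ) (hm : 3 ≤ m) (a b c d : ℂ) (hdet : a * d - b * c ≠ 0)
    (hroot : ∀ z : ℂ, z ^ m = 1 → (a * z + b) ^ m = (c * z + d) ^ m) :
    (b = 0 ∧ c = 0 ∧ a ^ m = d ^ m) ∨ (a = 0 ∧ d = 0 ∧ b ^ m = c ^ m) := by
  have hm0 : 0 < m := by omega
  set P : ℂ[X] := (C a * X + C b) ^ m - (C c * X + C d) ^ m - C (a ^ m - c ^ m) * (X ^ m - 1)
    with hPdef
  have hcoeff : ∀ k, k ≤ m → P.coeff k =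
      (m.choose k : ℂ) * a ^ k * b ^ (m - k) - (m.choose k : ℂ) * c ^ k * d ^ (m - k)
        - (a ^ m - c ^ m) * ((if k = m then (1:ℂ) else 0) - (if k = 0 then (1:ℂ) else 0)) := by
    intro k hk
    rw [hPdef]
    simp only [coeff_sub, coeff_C_mul, coeff_X_pow, coeff_one,
      coeff_lin_pow_s15 a b m k hk, coeff_lin_pow_s15 c d m k hk]
  have heval : ∀ z : ℂ, z ^ m = 1 → P.eval z = 0 := by
    intro z hz
    simp [hPdef, hz, hroot z hz]
  have hP : P = 0 := by
    by_contra hne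
    have hdeg : P.natDegree ≤ m := by
      have h1 : ((C a * X + C b) ^ m).natDegree ≤ m := by
        calc ((C a * X + C b) ^ m).natDegree ≤ m * (C a * X + C b).natDegree :=
              natDegree_pow_le
          _ ≤ m * 1 := Nat.mul_le_mul_left m (natDegree_linear_le)
          _ = m := Nat.mul_one m
      have h2 : ((C c * X + C d) ^ m).natDegree ≤ m := by
        calc ((C c * X + C d) ^ m).natDegree ≤ m * (C c * X + C d).natDegree :=
              natDegree_pow_le
          _ ≤ m * 1 := Nat.mul_le_mul_left m (natDegree_linear_le)
          _ = m := Nat.mul_one m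
      have h3 : (C (a ^ m - c ^ m) * (X ^ m - 1)).natDegree ≤ m := by
        refine (natDegree_C_mul_le _ _).trans ?_
        refine (natDegree_sub_le _ _).trans ?_
        simp
      exact (natDegree_sub_le _ _).trans (max_le ((natDegree_sub_le _ _).trans (max_le h1 h2)) h3)
    have hcm : P.coeff m = 0 := by
      rw [hcoeff m le_rfl, if_pos rfl, if_neg (by omega)]
      simp [Nat.sub_self, Nat.choose_self]
    have hlt : P.natDegree < m := by
      rcases lt_or_eq_of_le hdeg with h | h
      · exact h
      · exact absurd (leadingCoeff_eq_zero.mp (by rw [leadingCoeff, h]; exact hcm)) hne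
    have hprim := Complex.isPrimitiveRoot_exp m (by omega)
    have hcard : (nthRootsFinset m (1 : ℂ)).card = m := hprim.card_nthRootsFinset
    refine hne (eq_zero_of_natDegree_lt_card_of_eval_eq_zero' P (nthRootsFinset m (1 : ℂ)) ?_ ?_)
    · intro z hz
      exact heval z ((mem_nthRootsFinset hm0 (1 : ℂ)).mp hz)
    · rw [hcard]; exact hlt
  have key : ∀ k, 1 ≤ k → k ≤ m - 1 → a ^ k * b ^ (m - k) = c ^ k * d ^ (m - k) := by
    intro k hk1 hk2
    have h0 := hcoeff k (by omega)
    rw [hP, if_neg (by omega), if_neg (by omega)] at h0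
    simp only [coeff_zero] at h0
    have hch : (m.choose k : ℂ) ≠ 0 :=
      Nat.cast_ne_zero.mpr (Nat.choose_pos (show k ≤ m by omega)).ne'
    have h1 : (m.choose k : ℂ) * (a ^ k * b ^ (m - k) - c ^ k * d ^ (m - k)) = 0 := by
      linear_combination -h0
    rcases mul_eq_zero.mp h1 with h | h
    · exact absurd h hch
    · linear_combination h
  have key0 : a ^ m + b ^ m = c ^ m + d ^ m := by
    have h0 := hcoeff 0 (by omega)
    rw [hP, if_neg (by omega), if_pos rfl] at h0
    simp only [coeff_zero, Nat.choose_zero_right, Nat.cast_one, pow_zero, Nat.sub_zero] at h0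
    linear_combination -h0
  obtain ⟨e, rfl⟩ : ∃ e, m = e + 3 := ⟨m - 3, by omega⟩
  have E1 : a ^ 1 * b ^ (e + 2) = c ^ 1 * d ^ (e + 2) := by
    have := key 1 (by omega) (by omega); rwa [show e + 3 - 1 = e + 2 by omega] at this
  have E2 : a ^ 2 * b ^ (e + 1) = c ^ 2 * d ^ (e + 1) := by
    have := key 2 (by omega) (by omega); rwa [show e + 3 - 2 = e + 1 by omega] at this
  have E3 : a ^ (e + 2) * b ^ 1 = c ^ (e + 2) * d ^ 1 := by
    have := key (e + 2) (by omega) (by omega)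
    rwa [show e + 3 - (e + 2) = 1 by omega] at this
  by_cases hb : b = 0
  · subst hb
    have ha : a ≠ 0 := fun h => hdet (by rw [h]; ring)
    have hd : d ≠ 0 := fun h => hdet (by rw [h]; ring)
    have hc : c = 0 := by
      rw [zero_pow (by omega : e + 2 ≠ 0), mul_zero] at E1
      rcases mul_eq_zero.mp E1.symm with h | h
      · simpa using h
      · exact absurd (pow_eq_zero_iff (by omega : e + 2 ≠ 0) |>.mp h) hd
    refine Or.inl ⟨rfl, hc, ?_⟩
    rw [hc, zero_pow (by omega : e + 3 ≠ 0)] at key0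
    linear_combination key0
  · by_cases ha : a = 0
    · subst ha
      have hbne : b ≠ 0 := hb
      have hcne : c ≠ 0 := fun h => hdet (by rw [h]; ring)
      have hd : d = 0 := by
        rw [zero_pow (by omega : e + 2 ≠ 0), zero_mul] at E3
        rcases mul_eq_zero.mp E3.symm with h | h
        · exact absurd (pow_eq_zero_iff (by omega : e + 2 ≠ 0) |>.mp h) hcne
        · simpa using h
      refine Or.inr ⟨rfl, hd, ?_⟩
      rw [hd, zero_pow (by omega : e + 3 ≠ 0)] at key0
      linear_combination key0
    · exfalso
      have hd : d ≠ 0 := by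
        intro h
        rw [h, zero_pow (by omega : e + 2 ≠ 0), mul_zero] at E1
        rcases mul_eq_zero.mp E1 with h' | h'
        · exact ha (by simpa using h')
        · exact hb (pow_eq_zero_iff (by omega : e + 2 ≠ 0) |>.mp h')
      have hc : c ≠ 0 := by
        intro h
        rw [h, zero_pow (by omega : e + 2 ≠ 0), zero_mul] at E3
        rcases mul_eq_zero.mp E3 with h' | h'
        · exact ha (pow_eq_zero_iff (by omega : e + 2 ≠ 0) |>.mp h')
        · exact hb (by simpa using h')
      have h2 : (a ^ 2 * b ^ (e + 1)) * b ^ (e + 3) = (a ^ 2 * b ^ (e + 1)) * d ^ (e + 3) := by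
        linear_combination (a * b ^ (e + 2) + c * d ^ (e + 2)) * E1 - d ^ (e + 3) * E2
      have hbm : b ^ (e + 3) = d ^ (e + 3) :=
        mul_left_cancel₀ (mul_ne_zero (pow_ne_zero 2 ha) (pow_ne_zero _ hb)) h2
      have h3 : b ^ (e + 2) * (a * d) = b ^ (e + 2) * (b * c) := by
        linear_combination d * E1 - c * hbm
      exact hdet (by linear_combination mul_left_cancel₀ (pow_ne_zero (e + 2) hb) h3)

open OnePoint

/-- a Möbius transformation of the Riemann sphere preserving the
unit circle and the group `G` of `m`-th roots of unity (`m ≥ 3`) is either a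
rotation `z ↦ ζz` or a reflection `z ↦ ζ/z` with `ζ ∈ G`. -/
theorem stmt_15 (m : ℕ) (hm : 3 ≤ m) (ψ : OnePoint ℂ → OnePoint ℂ)
    (a b c d : ℂ) (hdet : a * d - b * c ≠ 0)
    (hψ1 : ∀ w : ℂ, c * w + d ≠ 0 →
      ψ (w : OnePoint ℂ) = (((a * w + b) / (c * w + d) : ℂ) : OnePoint ℂ))
    (hψ2 : ∀ w : ℂ, c * w + d = 0 → ψ (w : OnePoint ℂ) = ∞)
    (hψ3 : c = 0 → ψ ∞ = ∞)
    (hψ4 : c ≠ 0 → ψ ∞ = ((a / c : ℂ) : OnePoint ℂ))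
    (hS : ψ '' ((fun z : ℂ => (z : OnePoint ℂ)) '' {z : ℂ | ‖z‖ = 1})
       = (fun z : ℂ => (z : OnePoint ℂ)) '' {z : ℂ | ‖z‖ = 1})
    (hG : ψ '' ((fun z : ℂ => (z : OnePoint ℂ)) '' {z : ℂ | z ^ m = 1})
       = (fun z : ℂ => (z : OnePoint ℂ)) '' {z : ℂ | z ^ m = 1}) :
    ∃ ζ : ℂ, ζ ^ m = 1 ∧
      (((∀ w : ℂ, ψ (w : OnePoint ℂ) = ((ζ * w : ℂ) : OnePoint ℂ)) ∧ ψ ∞ = ∞) ∨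
       ((∀ w : ℂ, w ≠ 0 → ψ (w : OnePoint ℂ) = ((ζ / w : ℂ) : OnePoint ℂ)) ∧
         ψ ((0 : ℂ) : OnePoint ℂ) = ∞ ∧ ψ ∞ = ((0 : ℂ) : OnePoint ℂ))) := by
  have hroot : ∀ z : ℂ, z ^ m = 1 → (a * z + b) ^ m = (c * z + d) ^ m := by
    intro z hz
    have hmem : ψ (z : OnePoint ℂ) ∈ (fun z : ℂ => (z : OnePoint ℂ)) '' {z : ℂ | z ^ m = 1} := by
      rw [← hG]
      exact Set.mem_image_of_mem ψ (Set.mem_image_of_mem _ hz)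
    obtain ⟨u, hu, he⟩ := hmem
    have hcd : c * z + d ≠ 0 := by
      intro h
      rw [hψ2 z h] at he
      exact OnePoint.coe_ne_infty u he
    rw [hψ1 z hcd] at he
    have huz : (a * z + b) / (c * z + d) = u := OnePoint.coe_eq_coe.mp he.symm
    have : ((a * z + b) / (c * z + d)) ^ m = 1 := by rw [huz]; exact hu
    rw [div_pow] at this
    exact (div_eq_one_iff_eq (pow_ne_zero m hcd)).mp this
  rcases key_alg m hm a b c d hdet hroot with ⟨hb, hc, hpow⟩ | ⟨ha, hd, hpow⟩
  · subst hb; subst hc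
    have hd : d ≠ 0 := by intro h; exact hdet (by rw [h]; ring)
    have ha : a ≠ 0 := by intro h; exact hdet (by rw [h]; ring)
    refine ⟨a / d, by rw [div_pow, hpow, div_self (pow_ne_zero m hd)], Or.inl ⟨?_, hψ3 rfl⟩⟩
    intro w
    rw [hψ1 w (by simpa using hd)]
    congr 1
    field_simp
    simp [hd]
  · subst ha; subst hd
    have hc : c ≠ 0 := by intro h; exact hdet (by rw [h]; ring)
    have hb : b ≠ 0 := by intro h; exact hdet (by rw [h]; ring)
    refine ⟨b / c, by rw [div_pow, hpow, div_self (pow_ne_zero m hc)], Or.inr ⟨?_, ?_, ?_⟩⟩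
    · intro w hw
      rw [hψ1 w (by simpa using mul_ne_zero hc hw)]
      congr 1
      field_simp
      ring
    · exact hψ2 0 (by ring)
    · rw [hψ4 hc]
      norm_num
end

section
/- Let G be a finite subgroup of S^1 with |G| ≥ 3 and let ξ, μ ∈ ℂ^*. Then for every A ⊆ ℂ^*, the ratio set A/A is not equal to (ξG + μ) \ {0}. -/
open Pointwise

/-- for a finite subgroup `G` of the unit circle with `|G| ≥ 3`
and `ξ, μ ∈ ℂ^*`, no ratio set `A/A` equals `(ξG + μ) \ {0}`. -/
theorem stmt_16 (G : Set ℂ) (hGfin : G.Finite) (hG1 : (1 : ℂ) ∈ G)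
    (hGmul : ∀ x ∈ G, ∀ y ∈ G, x * y ∈ G)
    (hGcirc : ∀ z ∈ G, ‖z‖ = 1) (hGcard : 3 ≤ G.ncard)
    (ξ μ : ℂ) (hξ : ξ ≠ 0) (hμ : μ ≠ 0)
    (A : Set ℂ) (hA0 : (0 : ℂ) ∉ A) :
    A / A ≠ {z : ℂ | ∃ g ∈ G, z = ξ * g + μ} \ {0} := by
  classical
  intro hA
  set S : Set ℂ := {z : ℂ | ∃ g ∈ G, z = ξ * g + μ} \ {0} with hSdef
  set Gf : Finset ℂ := hGfin.toFinset with hGfdef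
  have hmem : ∀ z : ℂ, z ∈ Gf ↔ z ∈ G := fun z => hGfin.mem_toFinset
  have hn3 : 3 ≤ Gf.card := by
    rwa [Set.ncard_eq_toFinset_card G hGfin] at hGcard
  have hG0 : ∀ g ∈ G, g ≠ 0 := by
    intro g hg h
    have := hGcirc g hg
    rw [h] at this
    simp at this
  -- image under left multiplication is all of Gf
  have himage : ∀ g ∈ G, Gf.image (fun x => g * x) = Gf := by
    intro g hg
    have hg0 := hG0 g hg
    have hsub : Gf.image (fun x => g * x) ⊆ Gf := by
      intro y hy
      simp only [Finset.mem_image] at hy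
      obtain ⟨x, hx, rfl⟩ := hy
      exact (hmem _).2 (hGmul g hg x ((hmem _).1 hx))
    exact Finset.eq_of_subset_of_card_le hsub
      (le_of_eq (Finset.card_image_of_injective _ (mul_right_injective₀ hg0)).symm)
  -- closure under inverses
  have hGinv : ∀ g ∈ G, g⁻¹ ∈ G := by
    intro g hg
    have h1 : (1 : ℂ) ∈ Gf.image (fun x => g * x) := by
      rw [himage g hg]; exact (hmem _).2 hG1
    simp only [Finset.mem_image] at h1
    obtain ⟨x, hx, hgx⟩ := h1
    have hx' : x = g⁻¹ := eq_inv_of_mul_eq_one_right hgx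
    rw [← hx']; exact (hmem _).1 hx
  -- an element different from 1
  have hex1 : ∃ e ∈ Gf, e ≠ 1 := by
    have h2 : 0 < (Gf.erase 1).card := by
      have := Finset.card_erase_of_mem ((hmem 1).2 hG1)
      omega
    obtain ⟨e, he⟩ := Finset.card_pos.1 h2
    exact ⟨e, Finset.mem_of_mem_erase he, Finset.ne_of_mem_erase he⟩
  obtain ⟨e, heGf, he1⟩ := hex1
  have heG : e ∈ G := (hmem _).1 heGf
  -- sum of elements of G is zero
  have hsumG : ∑ g ∈ Gf, g = 0 := by
    have h1 : ∑ g ∈ Gf, g = ∑ g ∈ Gf.image (fun x => e * x), g := by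
      rw [himage e heG]
    rw [Finset.sum_image (fun x _ y _ h => mul_left_cancel₀ (hG0 e heG) h)] at h1
    have h2 : ∑ g ∈ Gf, e * g = e * ∑ g ∈ Gf, g := by rw [Finset.mul_sum]
    have h3 : (e - 1) * ∑ g ∈ Gf, g = 0 := by
      rw [sub_mul, one_mul, ← h2, ← h1, sub_self]
    rcases mul_eq_zero.1 h3 with h | h
    · exact absurd (sub_eq_zero.1 h) he1
    · exact h
  -- sum of inverses is zero
  have hsuminv : ∑ g ∈ Gf, g⁻¹ = 0 := by
    have hsub : Gf.image (fun x => x⁻¹) ⊆ Gf := by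
      intro y hy
      simp only [Finset.mem_image] at hy
      obtain ⟨x, hx, rfl⟩ := hy
      exact (hmem _).2 (hGinv x ((hmem _).1 hx))
    have him : Gf.image (fun x => x⁻¹) = Gf :=
      Finset.eq_of_subset_of_card_le hsub
        (le_of_eq (Finset.card_image_of_injective _ inv_injective).symm)
    have h1 : ∑ g ∈ Gf, g = ∑ g ∈ Gf.image (fun x => x⁻¹), g := by rw [him]
    rw [Finset.sum_image (fun x _ y _ h => inv_injective h)] at h1
    rw [← h1, hsumG]
  -- S is closed under inversion
  have hSinv : ∀ z ∈ S, z⁻¹ ∈ S := by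
    intro z hz
    rw [← hA] at hz ⊢
    rw [Set.mem_div] at hz ⊢
    obtain ⟨x, hx, y, hy, hxy⟩ := hz
    exact ⟨y, hy, x, hx, by rw [← hxy, inv_div]⟩
  -- 1 ∈ S
  have honeS : (1 : ℂ) ∈ S := by
    have hexg : ∃ g ∈ G, ξ * g + μ ≠ 0 := by
      by_contra hcon
      push_neg at hcon
      have h1 : ξ * 1 + μ = 0 := hcon 1 hG1
      have h2 : ξ * e + μ = 0 := hcon e heG
      have h3 : ξ * 1 = ξ * e := by linear_combination h1 - h2
      exact he1 (mul_left_cancel₀ hξ h3).symm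
    obtain ⟨g, hg, hgne⟩ := hexg
    have hgS : ξ * g + μ ∈ S := ⟨⟨g, hg, rfl⟩, hgne⟩
    rw [← hA] at hgS ⊢
    rw [Set.mem_div] at hgS ⊢
    obtain ⟨x, hx, y, hy, _⟩ := hgS
    have hx0 : x ≠ 0 := fun h => hA0 (h ▸ hx)
    exact ⟨x, hx, x, hx, div_self hx0⟩
  by_cases h0 : ∃ g₀ ∈ G, ξ * g₀ + μ = 0
  · -- CASE: 0 is a value of g ↦ ξg + μ on G
    obtain ⟨g₀, hg₀G, hg₀⟩ := h0
    have hg₀0 : g₀ ≠ 0 := hG0 _ hg₀G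
    have hμval : μ = -(ξ * g₀) := by linear_combination hg₀
    set Gf' : Finset ℂ := Gf.erase g₀ with hGf'def
    have hg₀Gf : g₀ ∈ Gf := (hmem _).2 hg₀G
    have hcard' : Gf'.card = Gf.card - 1 := Finset.card_erase_of_mem hg₀Gf
    have hmem' : ∀ z, z ∈ Gf' ↔ z ∈ G ∧ z ≠ g₀ := by
      intro z
      rw [Finset.mem_erase, hmem]
      tauto
    have hsum' : ∑ g ∈ Gf', g = -g₀ := by
      have h1 := Finset.sum_erase_add Gf id hg₀Gf
      simp only [id] at h1
      have h2 : ∑ g ∈ Gf', g + g₀ = 0 := by rw [h1, hsumG]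
      linear_combination h2
    have hne : ∀ g ∈ Gf', ξ * g + μ ≠ 0 := by
      intro g hg hcon
      obtain ⟨hgG, hgne⟩ := (hmem' g).1 hg
      have h3 : ξ * g = ξ * g₀ := by linear_combination hcon - hg₀
      exact hgne (mul_left_cancel₀ hξ h3)
    -- inversion partner function τ
    have hτex : ∀ g ∈ Gf', ∃ g' ∈ Gf', (ξ * g + μ)⁻¹ = ξ * g' + μ := by
      intro g hg
      have hgS : ξ * g + μ ∈ S := ⟨⟨g, ((hmem' g).1 hg).1, rfl⟩, hne g hg⟩
      obtain ⟨⟨g', hg'G, hg'e⟩, hinv0⟩ := hSinv _ hgS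
      refine ⟨g', (hmem' g').2 ⟨hg'G, ?_⟩, hg'e⟩
      intro hcon
      rw [hcon] at hg'e
      exact hinv0 (by rw [hg'e, hg₀]; rfl)
    choose! τ hτmem hτeq using hτex
    have hE : ∀ g ∈ Gf', (ξ * g + μ) * (ξ * τ g + μ) = 1 := by
      intro g hg
      rw [← hτeq g hg]
      exact mul_inv_cancel₀ (hne g hg)
    have hbij : ∀ g ∈ Gf', τ (τ g) = g := by
      intro g hg
      have h1 := hE g hg
      have h2 := hτeq (τ g) (hτmem g hg)
      have h3 : (ξ * τ g + μ)⁻¹ = ξ * g + μ := (eq_inv_of_mul_eq_one_left h1).symm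
      rw [h3] at h2
      have h5 : ξ * g = ξ * τ (τ g) := by linear_combination h2
      exact (mul_left_cancel₀ hξ h5).symm
    have hsumτ : ∑ g ∈ Gf', (ξ * τ g + μ) = ∑ g ∈ Gf', (ξ * g + μ) :=
      Finset.sum_nbij' τ τ hτmem hτmem hbij hbij (fun a _ => rfl)
    have hLHS : ∑ g ∈ Gf', (ξ * g + μ)⁻¹ = ∑ g ∈ Gf', (ξ * g + μ) := by
      rw [Finset.sum_congr rfl hτeq]
      exact hsumτ
    have hRHSval : ∑ g ∈ Gf', (ξ * g + μ) = (Gf.card : ℂ) * μ := by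
      rw [Finset.sum_add_distrib, ← Finset.mul_sum, hsum', Finset.sum_const, nsmul_eq_mul,
        hcard']
      have hc : ((Gf.card - 1 : ℕ) : ℂ) = (Gf.card : ℂ) - 1 := by
        have h1 : 1 ≤ Gf.card := by omega
        push_cast [Nat.cast_sub h1]
        ring
      rw [hc]
      linear_combination -hμval
    -- the pairing sum for inverses
    have hinvsum : ∑ g ∈ Gf', ((g - g₀)⁻¹ + (2 * g₀)⁻¹) = 0 := by
      apply Finset.sum_involution (g := fun a _ => g₀ ^ 2 * a⁻¹)
      · -- pair sums vanish
        intro a ha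
        obtain ⟨haG, hane⟩ := (hmem' a).1 ha
        have ha0 : a ≠ 0 := hG0 a haG
        have hd1 : a - g₀ ≠ 0 := sub_ne_zero.2 hane
        have hd3 : g₀ ^ 2 - g₀ * a ≠ 0 := by
          intro h
          apply hane
          have h3 : g₀ * a = g₀ * g₀ := by linear_combination -h
          exact mul_left_cancel₀ hg₀0 h3
        have hkey2 : (g₀ ^ 2 * a⁻¹ - g₀) * (-a * (g₀ * (a - g₀))⁻¹) = 1 := by
          have hgd : g₀ * (a - g₀) ≠ 0 := mul_ne_zero hg₀0 hd1
          have hc1 : a⁻¹ * a = 1 := inv_mul_cancel₀ ha0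
          have hc2 : (g₀ * (a - g₀))⁻¹ * (g₀ * (a - g₀)) = 1 := inv_mul_cancel₀ hgd
          field_simp
          ring
        have h6 : (g₀ ^ 2 * a⁻¹ - g₀)⁻¹ = -a * (g₀ * (a - g₀))⁻¹ :=
          inv_eq_of_mul_eq_one_right hkey2
        rw [h6]
        field_simp
        ring
      · -- fixed points have zero value
        intro a ha hf hcon
        apply hf
        obtain ⟨haG, hane⟩ := (hmem' a).1 ha
        have ha0 : a ≠ 0 := hG0 a haG
        have h1 : a * a = g₀ ^ 2 := by
          have h2 : g₀ ^ 2 * a⁻¹ * a = a * a := by rw [hcon]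
          rw [mul_assoc, inv_mul_cancel₀ ha0, mul_one] at h2
          exact h2.symm
        have h3 : (a - g₀) * (a + g₀) = 0 := by linear_combination h1
        have h4 : a = -g₀ := by
          rcases mul_eq_zero.1 h3 with h | h
          · exact absurd (sub_eq_zero.1 h) hane
          · linear_combination h
        rw [h4]
        have h5 : (-g₀ - g₀ : ℂ) = -(2 * g₀) := by ring
        rw [h5, inv_neg]
        ring
      · -- involution property
        intro a ha
        obtain ⟨haG, hane⟩ := (hmem' a).1 ha
        have ha0 : a ≠ 0 := hG0 a haG
        field_simp
      · -- the involution stays in the set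
        intro a ha
        obtain ⟨haG, hane⟩ := (hmem' a).1 ha
        have ha0 : a ≠ 0 := hG0 a haG
        have hmulG : g₀ ^ 2 * a⁻¹ ∈ G := by
          rw [pow_two]
          exact hGmul _ (hGmul _ hg₀G _ hg₀G) _ (hGinv a haG)
        refine (hmem' _).2 ⟨hmulG, ?_⟩
        intro h
        apply hane
        have h1 : g₀ ^ 2 * a⁻¹ * a = g₀ * a := by rw [h]
        rw [mul_assoc, inv_mul_cancel₀ ha0, mul_one] at h1
        have h2 : g₀ * a = g₀ * g₀ := by linear_combination -h1
        exact mul_left_cancel₀ hg₀0 h2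
    have hinv2 : ∑ g ∈ Gf', (g - g₀)⁻¹ = -((Gf'.card : ℂ)) * (2 * g₀)⁻¹ := by
      rw [Finset.sum_add_distrib, Finset.sum_const, nsmul_eq_mul] at hinvsum
      linear_combination hinvsum
    have hLHSval : ∑ g ∈ Gf', (ξ * g + μ)⁻¹ = ξ⁻¹ * (-((Gf'.card : ℂ)) * (2 * g₀)⁻¹) := by
      have hcg : ∀ g ∈ Gf', (ξ * g + μ)⁻¹ = ξ⁻¹ * (g - g₀)⁻¹ := by
        intro g hg
        have h1 : ξ * g + μ = ξ * (g - g₀) := by rw [hμval]; ring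
        rw [h1, mul_inv]
      rw [Finset.sum_congr rfl hcg, ← Finset.mul_sum, hinv2]
    have hcast : ((Gf'.card : ℕ) : ℂ) = (Gf.card : ℂ) - 1 := by
      rw [hcard']
      have h1 : 1 ≤ Gf.card := by omega
      push_cast [Nat.cast_sub h1]
      ring
    set N : ℂ := (Gf.card : ℂ) with hNdef
    have hmain : N * μ = ξ⁻¹ * (-(N - 1) * (2 * g₀)⁻¹) := by
      rw [← hcast, ← hLHSval, hLHS, hRHSval]
    have hkey : 2 * N * μ ^ 2 = N - 1 := by
      have h2g : (2 : ℂ) * g₀ ≠ 0 := mul_ne_zero two_ne_zero hg₀0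
      field_simp at hmain
      linear_combination -hmain + 2 * N * μ * hμval
    -- μ is real
    have hcard3 : (3 : ℝ) ≤ (Gf.card : ℝ) := by exact_mod_cast hn3
    have hN0 : N ≠ 0 := by
      rw [hNdef]
      exact_mod_cast (by omega : Gf.card ≠ 0)
    set r : ℝ := ((Gf.card : ℝ) - 1) / (2 * (Gf.card : ℝ)) with hrdef
    have hrpos : 0 < r := by
      rw [hrdef]
      apply div_pos <;> linarith
    have hmu2 : μ ^ 2 = (r : ℂ) := by
      rw [hrdef]
      push_cast
      rw [hNdef] at hkey hN0
      field_simp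
      linear_combination hkey
    have h2im : (μ ^ 2).im = 0 := by rw [hmu2]; simp
    have h2re : (μ ^ 2).re = r := by rw [hmu2]; simp
    rw [pow_two, Complex.mul_im] at h2im
    rw [pow_two, Complex.mul_re] at h2re
    have him : μ.im = 0 := by
      have h3 : μ.re * μ.im = 0 := by linarith
      rcases mul_eq_zero.1 h3 with h' | h'
      · exfalso
        nlinarith [sq_nonneg μ.im]
      · exact h'
    -- use 1 ∈ S
    obtain ⟨⟨g₁, hg₁G, hg₁e⟩, -⟩ := honeS
    set h : ℂ := g₁ * g₀⁻¹ with hhdef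
    have hhG : h ∈ G := hGmul _ hg₁G _ (hGinv _ hg₀G)
    have hg₁h : h * g₀ = g₁ := by
      rw [hhdef, mul_assoc, inv_mul_cancel₀ hg₀0, mul_one]
    have hμh : μ * (h - 1) = -1 := by
      linear_combination hg₁e - ξ * hg₁h + h * hμval
    have hμre : μ.re ≠ 0 := by
      intro hcon
      apply hμ
      apply Complex.ext <;> simp [hcon, him]
    have hhim : h.im = 0 := by
      have h1 : (μ * (h - 1)).im = 0 := by rw [hμh]; simp
      rw [Complex.mul_im, Complex.sub_im, Complex.sub_re, Complex.one_im, him] at h1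
      ring_nf at h1
      have h2 : μ.re * h.im = 0 := by linarith
      rcases mul_eq_zero.1 h2 with h' | h'
      · exact absurd h' hμre
      · exact h'
    have hhabs := hGcirc h hhG
    have hsq : h.re ^ 2 + h.im ^ 2 = 1 := by
      have h5 := Complex.sq_norm h
      rw [hhabs, Complex.normSq_apply] at h5
      linear_combination -h5
    have hre2 : (h.re - 1) * (h.re + 1) = 0 := by
      rw [hhim] at hsq
      linear_combination hsq
    have hne1 : h ≠ 1 := by
      intro hcon
      rw [hcon] at hμh
      simp at hμh
    have hre : h.re = -1 := by
      rcases mul_eq_zero.1 hre2 with h' | h'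
      · exfalso
        apply hne1
        apply Complex.ext
        · simpa using sub_eq_zero.1 h'
        · simpa using hhim
      · linear_combination h'
    have hhm1 : h = -1 := by
      apply Complex.ext
      · simpa using hre
      · simpa using hhim
    have hμhalf : μ = 1 / 2 := by
      rw [hhm1] at hμh
      linear_combination (-1/2 : ℂ) * hμh
    rw [hμhalf] at hkey
    have hN2 : N = 2 := by linear_combination -2 * hkey
    rw [hNdef] at hN2
    have : Gf.card = 2 := by exact_mod_cast hN2
    omega
  · -- CASE: ξg + μ never vanishes on G
    push_neg at h0
    have hσex : ∀ g ∈ Gf, ∃ g' ∈ Gf, (ξ * g + μ)⁻¹ = ξ * g' + μ := by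
      intro g hg
      have hgG := (hmem g).1 hg
      have hgS : ξ * g + μ ∈ S := ⟨⟨g, hgG, rfl⟩, h0 g hgG⟩
      obtain ⟨⟨g', hg'G, hg'e⟩, -⟩ := hSinv _ hgS
      exact ⟨g', (hmem g').2 hg'G, hg'e⟩
    choose! σ hσmem hσeq using hσex
    have hE : ∀ g ∈ Gf, (ξ * g + μ) * (ξ * σ g + μ) = 1 := by
      intro g hg
      rw [← hσeq g hg]
      exact mul_inv_cancel₀ (h0 g ((hmem g).1 hg))
    have hbij : ∀ g ∈ Gf, σ (σ g) = g := by
      intro g hg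
      have h1 := hE g hg
      have h2 := hσeq (σ g) (hσmem g hg)
      have h3 : (ξ * σ g + μ)⁻¹ = ξ * g + μ := (eq_inv_of_mul_eq_one_left h1).symm
      rw [h3] at h2
      have h5 : ξ * g = ξ * σ (σ g) := by linear_combination h2
      exact (mul_left_cancel₀ hξ h5).symm
    have hsumσ : ∑ g ∈ Gf, σ g = 0 := by
      have h1 : ∑ g ∈ Gf, σ g = ∑ g ∈ Gf, g :=
        Finset.sum_nbij' σ σ hσmem hσmem hbij hbij (fun a _ => rfl)
      rw [h1, hsumG]
    set T : ℂ := ∑ g ∈ Gf, σ g * g⁻¹ with hTdef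
    have hT : T = -(Gf.card : ℂ) := by
      have hterm : ∀ g ∈ Gf,
          ξ ^ 2 * σ g + ξ * μ + ξ * μ * (σ g * g⁻¹) + (μ ^ 2 - 1) * g⁻¹ = 0 := by
        intro g hg
        have hg0 : g ≠ 0 := hG0 g ((hmem g).1 hg)
        have h1 := hE g hg
        have hgg : g⁻¹ * g = 1 := inv_mul_cancel₀ hg0
        have h2 : (ξ ^ 2 * σ g + ξ * μ + ξ * μ * (σ g * g⁻¹) + (μ ^ 2 - 1) * g⁻¹) * g = 0 := by
          linear_combination h1 + (ξ * μ * σ g + μ ^ 2 - 1) * hgg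
        rcases mul_eq_zero.1 h2 with h | h
        · exact h
        · exact absurd h hg0
      have hsum0 : ∑ g ∈ Gf,
          (ξ ^ 2 * σ g + ξ * μ + ξ * μ * (σ g * g⁻¹) + (μ ^ 2 - 1) * g⁻¹) = 0 :=
        Finset.sum_eq_zero hterm
      rw [Finset.sum_add_distrib, Finset.sum_add_distrib, Finset.sum_add_distrib] at hsum0
      have e1 : ∑ g ∈ Gf, ξ ^ 2 * σ g = 0 := by
        rw [← Finset.mul_sum, hsumσ, mul_zero]
      have e2 : ∑ _g ∈ Gf, ξ * μ = (Gf.card : ℂ) * (ξ * μ) := by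
        rw [Finset.sum_const, nsmul_eq_mul]
      have e3 : ∑ g ∈ Gf, ξ * μ * (σ g * g⁻¹) = ξ * μ * T := by
        rw [hTdef, Finset.mul_sum]
      have e4 : ∑ g ∈ Gf, (μ ^ 2 - 1) * g⁻¹ = 0 := by
        rw [← Finset.mul_sum, hsuminv, mul_zero]
      rw [e1, e2, e3, e4] at hsum0
      have hξμ : ξ * μ ≠ 0 := mul_ne_zero hξ hμ
      have h1 : ξ * μ * ((Gf.card : ℂ) + T) = 0 := by
        linear_combination hsum0
      have h2 : (Gf.card : ℂ) + T = 0 := by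
        rcases mul_eq_zero.1 h1 with h | h
        · exact absurd h hξμ
        · exact h
      linear_combination h2
    have habs : ∀ g ∈ Gf, ‖σ g * g⁻¹‖ = 1 := by
      intro g hg
      rw [norm_mul, norm_inv, hGcirc (σ g) ((hmem _).1 (hσmem g hg)),
        hGcirc g ((hmem g).1 hg)]
      norm_num
    have hnonneg : ∀ g ∈ Gf, 0 ≤ 1 + (σ g * g⁻¹).re := by
      intro g hg
      have h1 : |(σ g * g⁻¹).re| ≤ ‖σ g * g⁻¹‖ := Complex.abs_re_le_norm _
      rw [habs g hg] at h1
      have h2 := neg_abs_le (σ g * g⁻¹).re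
      linarith
    have hsumre : ∑ g ∈ Gf, (1 + (σ g * g⁻¹).re) = 0 := by
      rw [Finset.sum_add_distrib, Finset.sum_const, nsmul_eq_mul, mul_one]
      have h1 : ∑ g ∈ Gf, (σ g * g⁻¹).re = T.re := by
        rw [hTdef]
        exact (Complex.re_sum _ _).symm
      rw [h1, hT]
      simp
    have hall : ∀ g ∈ Gf, σ g = -g := by
      intro g hg
      have h1 : 1 + (σ g * g⁻¹).re = 0 :=
        (Finset.sum_eq_zero_iff_of_nonneg hnonneg).1 hsumre g hg
      have hre : (σ g * g⁻¹).re = -1 := by linarith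
      have habs1 := habs g hg
      have hsq : (σ g * g⁻¹).re ^ 2 + (σ g * g⁻¹).im ^ 2 = 1 := by
        have h5 := Complex.sq_norm (σ g * g⁻¹)
        rw [habs1, Complex.normSq_apply] at h5
        linear_combination -h5
      have him2 : (σ g * g⁻¹).im ^ 2 = 0 := by
        rw [hre] at hsq
        linarith
      have him : (σ g * g⁻¹).im = 0 := by
        exact pow_eq_zero_iff (two_ne_zero) |>.1 him2
      have hz : σ g * g⁻¹ = -1 := by
        apply Complex.ext
        · simpa using hre
        · simpa using him
      have hg0 : g ≠ 0 := hG0 g ((hmem g).1 hg)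
      have h4 : σ g * g⁻¹ * g = -1 * g := by rw [hz]
      rwa [inv_mul_cancel_right₀ hg0, neg_one_mul] at h4
    have hEg : ∀ g ∈ Gf, μ ^ 2 - ξ ^ 2 * g ^ 2 = 1 := by
      intro g hg
      have h1 := hE g hg
      rw [hall g hg] at h1
      linear_combination h1
    -- pick three distinct elements
    have h1 : 0 < Gf.card := by omega
    obtain ⟨a, ha⟩ := Finset.card_pos.1 h1
    have h2 : 0 < (Gf.erase a).card := by
      rw [Finset.card_erase_of_mem ha]; omega
    obtain ⟨b, hb⟩ := Finset.card_pos.1 h2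
    have h3 : 0 < ((Gf.erase a).erase b).card := by
      rw [Finset.card_erase_of_mem hb, Finset.card_erase_of_mem ha]; omega
    obtain ⟨c, hc⟩ := Finset.card_pos.1 h3
    have hba : b ≠ a := Finset.ne_of_mem_erase hb
    have hcb : c ≠ b := Finset.ne_of_mem_erase hc
    have hca : c ≠ a := Finset.ne_of_mem_erase (Finset.mem_of_mem_erase hc)
    have hbGf : b ∈ Gf := Finset.mem_of_mem_erase hb
    have hcGf : c ∈ Gf := Finset.mem_of_mem_erase (Finset.mem_of_mem_erase hc)
    have hξ2 : ξ ^ 2 ≠ 0 := pow_ne_zero 2 hξ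
    have neg_of : ∀ x ∈ Gf, ∀ y ∈ Gf, x ≠ y → x = -y := by
      intro x hx y hy hxy
      have e1 := hEg x hx
      have e2 := hEg y hy
      have e3 : ξ ^ 2 * (x ^ 2 - y ^ 2) = 0 := by linear_combination e2 - e1
      have e4 : x ^ 2 - y ^ 2 = 0 := by
        rcases mul_eq_zero.1 e3 with h | h
        · exact absurd h hξ2
        · exact h
      have e5 : (x - y) * (x + y) = 0 := by linear_combination e4
      rcases mul_eq_zero.1 e5 with h | h
      · exact absurd (sub_eq_zero.1 h) hxy
      · linear_combination h
    have hbna : b = -a := neg_of b hbGf a ha hba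
    have hcna : c = -a := neg_of c hcGf a ha hca
    exact hcb (by rw [hbna, hcna])
end

section
/- Let p be an odd prime, G a proper multiplicative subgroup of F_p with |G| ≥ 3, and ξ, μ ∈ F_p^*. Then for every A ⊆ F_p^*, the ratio set A/A is not equal to (ξG + μ) \ {0}. -/
open Finset Pointwise

-- image of G under left mult by an element of G is G
lemma aux_img {p : ℕ} [Fact p.Prime] (G : Finset (ZMod p)) (hG0 : (0 : ZMod p) ∉ G)
    (hGmul : ∀ x ∈ G, ∀ y ∈ G, x * y ∈ G) {g : ZMod p} (hg : g ∈ G) :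
    G.image (fun x => g * x) = G := by
  have hgne : g ≠ 0 := fun h => hG0 (h ▸ hg)
  apply Finset.eq_of_subset_of_card_le
  · intro y hy
    simp only [Finset.mem_image] at hy
    obtain ⟨x, hx, rfl⟩ := hy
    exact hGmul _ hg _ hx
  · rw [Finset.card_image_of_injective _ (mul_right_injective₀ hgne)]

lemma aux_pow_card {p : ℕ} [Fact p.Prime] (G : Finset (ZMod p)) (hG0 : (0 : ZMod p) ∉ G)
    (hGmul : ∀ x ∈ G, ∀ y ∈ G, x * y ∈ G) {g : ZMod p} (hg : g ∈ G) :
    g ^ G.card = 1 := by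
  have hgne : g ≠ 0 := fun h => hG0 (h ▸ hg)
  have h1 : ∏ x ∈ G, x = ∏ x ∈ G, (g * x) := by
    conv_lhs => rw [← aux_img G hG0 hGmul hg]
    rw [Finset.prod_image (fun x _ y _ h => mul_left_cancel₀ hgne h)]
  rw [Finset.prod_mul_distrib, Finset.prod_const] at h1
  have hPne : (∏ x ∈ G, x) ≠ 0 :=
    Finset.prod_ne_zero_iff.mpr (fun x hx h => hG0 (h ▸ hx))
  have := mul_right_cancel₀ hPne ((one_mul (∏ x ∈ G, x)).trans h1)
  exact this.symm

lemma aux_sum_pow {p : ℕ} [Fact p.Prime] (G : Finset (ZMod p)) (hG0 : (0 : ZMod p) ∉ G)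
    (hG1 : (1 : ZMod p) ∈ G)
    (hGmul : ∀ x ∈ G, ∀ y ∈ G, x * y ∈ G) (m : ℕ) :
    ∑ g ∈ G, g ^ m = if G.card ∣ m then (G.card : ZMod p) else 0 := by
  have hn0 : 0 < G.card := Finset.card_pos.mpr ⟨1, hG1⟩
  by_cases hd : G.card ∣ m
  · rw [if_pos hd]
    obtain ⟨c, rfl⟩ := hd
    rw [Finset.sum_congr rfl (fun g hg => by
      rw [pow_mul, aux_pow_card G hG0 hGmul hg, one_pow])]
    simp
  · rw [if_neg hd]
    set n := G.card
    set r := m % n with hr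
    have hrn : r < n := Nat.mod_lt _ hn0
    have hr0 : r ≠ 0 := fun h => hd (Nat.dvd_of_mod_eq_zero h)
    have hgm : ∀ g ∈ G, g ^ m = g ^ r := by
      intro g hg
      conv_lhs => rw [← Nat.div_add_mod m n]
      rw [pow_add, pow_mul, aux_pow_card G hG0 hGmul hg, one_pow, one_mul]
    rw [Finset.sum_congr rfl hgm]
    -- find h ∈ G with h^r ≠ 1
    have hex : ∃ h ∈ G, h ^ r ≠ 1 := by
      by_contra hno
      push_neg at hno
      have hsub : G ⊆ (Polynomial.nthRoots r (1 : ZMod p)).toFinset := by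
        intro x hx
        rw [Multiset.mem_toFinset, Polynomial.mem_nthRoots (Nat.pos_of_ne_zero hr0)]
        exact hno x hx
      have := Finset.card_le_card hsub
      have h2 := Multiset.toFinset_card_le (Polynomial.nthRoots r (1 : ZMod p))
      have h3 := Polynomial.card_nthRoots r (1 : ZMod p)
      omega
    obtain ⟨h, hh, hh1⟩ := hex
    have hre : ∑ g ∈ G, g ^ r = h ^ r * ∑ g ∈ G, g ^ r := by
      conv_lhs => rw [← aux_img G hG0 hGmul hh]
      have hgne : h ≠ 0 := fun h' => hG0 (h' ▸ hh)
      rw [Finset.sum_image (fun x _ y _ h' => mul_left_cancel₀ hgne h')]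
      rw [Finset.mul_sum]
      exact Finset.sum_congr rfl (fun x _ => by rw [mul_pow])
    have : (h ^ r - 1) * ∑ g ∈ G, g ^ r = 0 := by linear_combination -hre
    rcases mul_eq_zero.mp this with h' | h'
    · exact absurd (by linear_combination h') hh1
    · exact h'


/-- Theorem 1.9(1): for an odd prime `p`, a proper
multiplicative subgroup `G` of `F_p` with `|G| ≥ 3`, and `ξ, μ ∈ F_p^*`,
no ratio set `A/A` equals `(ξG + μ) \ {0}`. -/
theorem stmt_17 (p : ℕ) [Fact p.Prime] (hodd : Odd p)
    (G : Finset (ZMod p)) (hG0 : (0 : ZMod p) ∉ G) (hG1 : (1 : ZMod p) ∈ G)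
    (hGmul : ∀ x ∈ G, ∀ y ∈ G, x * y ∈ G)
    (hGproper : ∃ x : ZMod p, x ≠ 0 ∧ x ∉ G) (hGcard : 3 ≤ G.card)
    (ξ μ : ZMod p) (hξ : ξ ≠ 0) (hμ : μ ≠ 0)
    (A : Finset (ZMod p)) (hA0 : (0 : ZMod p) ∉ A) :
    A / A ≠ (G.image (fun g => ξ * g + μ)) \ {0} := by
  intro hAeq
  have hp : p.Prime := Fact.out
  set n := G.card with hncard
  have hn3 : 3 ≤ n := hGcard
  -- G avoids 0
  have hg0 : ∀ g ∈ G, g ≠ 0 := fun g hg h => hG0 (h ▸ hg)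
  -- n + 2 ≤ p
  have hnp : n + 2 ≤ p := by
    obtain ⟨x0, hx0ne, hx0G⟩ := hGproper
    have hsub : G ⊆ (Finset.univ.erase x0).erase 0 := by
      intro g hg
      refine Finset.mem_erase.mpr ⟨hg0 g hg, Finset.mem_erase.mpr ⟨?_, Finset.mem_univ g⟩⟩
      intro h; exact hx0G (h ▸ hg)
    have hcard := Finset.card_le_card hsub
    have h1 : ((Finset.univ.erase x0).erase 0).card = p - 1 - 1 := by
      rw [Finset.card_erase_of_mem, Finset.card_erase_of_mem (Finset.mem_univ x0)]
      · rw [Finset.card_univ, ZMod.card]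
      · exact Finset.mem_erase.mpr ⟨(Ne.symm hx0ne), Finset.mem_univ 0⟩
    have := hp.two_le
    omega
  have hple : 5 ≤ p := by omega
  -- cast facts
  have hcast : ∀ m : ℕ, 0 < m → m < p → ((m : ℕ) : ZMod p) ≠ 0 := by
    intro m h0 h1 h
    rw [ZMod.natCast_eq_zero_iff] at h
    exact absurd (Nat.le_of_dvd h0 h) (by omega)
  have hN0 : ((n : ℕ) : ZMod p) ≠ 0 := hcast n (by omega) (by omega)
  have h2ne : (2 : ZMod p) ≠ 0 := by
    have := hcast 2 (by omega) (by omega); simpa using this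
  have h3ne : (3 : ZMod p) ≠ 0 := by
    have := hcast 3 (by omega) (by omega); simpa using this
  -- every g in G: g^n = 1
  have hpow : ∀ g ∈ G, g ^ n = 1 := fun g hg => aux_pow_card G hG0 hGmul hg
  have hT : ∀ m : ℕ, ∑ g ∈ G, g ^ m = if n ∣ m then ((n : ℕ) : ZMod p) else 0 :=
    fun m => aux_sum_pow G hG0 hG1 hGmul m
  -- A nonempty, 1 ∈ RHS
  have hRHSne : ((G.image (fun g => ξ * g + μ)) \ {0}).Nonempty := by
    have hinj : Set.InjOn (fun g => ξ * g + μ) G := by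
      intro a _ b _ h
      simp only at h
      exact mul_left_cancel₀ hξ (by linear_combination h)
    have hcard : (G.image (fun g => ξ * g + μ)).card = n := Finset.card_image_of_injOn hinj
    have h1 : 1 ≤ ((G.image (fun g => ξ * g + μ)) \ {0}).card := by
      have := Finset.le_card_sdiff ({0} : Finset (ZMod p)) (G.image (fun g => ξ * g + μ))
      simp only [Finset.card_singleton] at this
      omega
    exact Finset.card_pos.mp (by omega)
  have hAne : A.Nonempty := by
    rcases Finset.eq_empty_or_nonempty A with h | h
    · rw [h, Finset.div_empty] at hAeq
      exact absurd hAeq.symm (Finset.nonempty_iff_ne_empty.mp hRHSne)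
    · exact h
  obtain ⟨a0, ha0⟩ := hAne
  have ha0ne : a0 ≠ 0 := fun h => hA0 (h ▸ ha0)
  -- 1 ∈ A/A = RHS
  have h1mem : (1 : ZMod p) ∈ (G.image (fun g => ξ * g + μ)) \ {0} := by
    rw [← hAeq]
    have := Finset.div_mem_div ha0 ha0
    rwa [div_self ha0ne] at this
  obtain ⟨hg1img, -⟩ := Finset.mem_sdiff.mp h1mem
  obtain ⟨g1, hg1G, hg1⟩ := Finset.mem_image.mp hg1img
  have hμ1 : μ ≠ 1 := by
    intro h
    rw [h] at hg1
    have : ξ * g1 = 0 := by linear_combination hg1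
    rcases mul_eq_zero.mp this with h' | h'
    · exact hξ h'
    · exact hg0 g1 hg1G h'
  have hE4 : (1 - μ) ^ n = ξ ^ n := by
    have h1 : ξ * g1 = 1 - μ := by linear_combination hg1
    calc (1 - μ) ^ n = (ξ * g1) ^ n := by rw [h1]
    _ = ξ ^ n * g1 ^ n := mul_pow _ _ _
    _ = ξ ^ n := by rw [hpow g1 hg1G, mul_one]
  -- u, v
  set u : ZMod p := 1 - μ ^ 2 with hu_def
  set v : ZMod p := -(μ * ξ) with hv_def
  have hvne : v ≠ 0 := by
    rw [hv_def]; intro h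
    rcases mul_eq_zero.mp (neg_eq_zero.mp h) with h' | h'
    · exact hμ h'
    · exact hξ h'
  -- key pointwise identity
  have key : ∀ g ∈ G, (ξ * g + μ) * ((v * g + u) ^ n - ξ ^ n * (ξ * g + μ) ^ n) = 0 := by
    intro g hg
    by_cases hs : ξ * g + μ = 0
    · rw [hs, zero_mul]
    · have hmem : (ξ * g + μ) ∈ (G.image (fun g => ξ * g + μ)) \ {0} := by
        refine Finset.mem_sdiff.mpr ⟨Finset.mem_image.mpr ⟨g, hg, rfl⟩, by simpa using hs⟩
      rw [← hAeq] at hmem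
      obtain ⟨a, ha, b, hb, hab⟩ := Finset.mem_div.mp hmem
      have hane : a ≠ 0 := fun h => hA0 (h ▸ ha)
      have hbne : b ≠ 0 := fun h => hA0 (h ▸ hb)
      have hinv : b / a ∈ A / A := Finset.div_mem_div hb ha
      rw [hAeq] at hinv
      obtain ⟨hinvimg, -⟩ := Finset.mem_sdiff.mp hinv
      obtain ⟨g', hg'G, hg'⟩ := Finset.mem_image.mp hinvimg
      have hprod : (ξ * g' + μ) * (ξ * g + μ) = 1 := by
        rw [hg', ← hab]
        field_simp
      have hxg : (ξ * g') * (ξ * g + μ) = v * g + u := by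
        rw [hv_def, hu_def]; linear_combination hprod
      have hn' : (v * g + u) ^ n = ξ ^ n * (ξ * g + μ) ^ n := by
        calc (v * g + u) ^ n = ((ξ * g') * (ξ * g + μ)) ^ n := by rw [hxg]
        _ = ξ ^ n * g' ^ n * (ξ * g + μ) ^ n := by rw [mul_pow, mul_pow]
        _ = ξ ^ n * (ξ * g + μ) ^ n := by rw [hpow g' hg'G, mul_one]
      rw [hn']; ring
  -- divisibility helper
  have hndvd : ∀ m : ℕ, 0 < m → m < 2*n → m ≠ n → ¬ n ∣ m := by
    intro m h1 h2 h3 hd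
    obtain ⟨q, rfl⟩ := hd
    rcases q with _ | _ | q
    · omega
    · omega
    · have h4 : n*2 ≤ n*(q+1+1) := Nat.mul_le_mul_left n (by omega)
      omega
  -- generic expansion: for every k, sums relation
  have hEXP : ∀ k : ℕ,
      (∑ j ∈ Finset.range (n+1), ((n.choose j : ZMod p) * v^j * u^(n-j) * ξ) * (∑ g ∈ G, g^(j+k+1)))
      + (∑ j ∈ Finset.range (n+1), ((n.choose j : ZMod p) * v^j * u^(n-j) * μ) * (∑ g ∈ G, g^(j+k)))
      = ξ^n * ∑ j ∈ Finset.range (n+1+1), (((n+1).choose j : ZMod p) * ξ^j * μ^(n+1-j)) * (∑ g ∈ G, g^(j+k)) := by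
    intro k
    have hterm : ∀ g : ZMod p, g^k * ((ξ*g+μ) * (v*g+u)^n)
        = ∑ j ∈ Finset.range (n+1), (((n.choose j : ZMod p) * v^j * u^(n-j) * ξ) * g^(j+k+1)
            + ((n.choose j : ZMod p) * v^j * u^(n-j) * μ) * g^(j+k)) := by
      intro g
      rw [add_pow, Finset.mul_sum, Finset.mul_sum]
      refine Finset.sum_congr rfl (fun j hj => ?_)
      rw [mul_pow, pow_succ g (j+k), pow_add g j k]
      ring
    have hterm2 : ∀ g : ZMod p, g^k * (ξ^n * (ξ*g+μ)^(n+1))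
        = ∑ j ∈ Finset.range (n+1+1), ξ^n * ((((n+1).choose j : ZMod p) * ξ^j * μ^(n+1-j)) * g^(j+k)) := by
      intro g
      rw [add_pow, Finset.mul_sum, Finset.mul_sum]
      refine Finset.sum_congr rfl (fun j hj => ?_)
      rw [mul_pow, pow_add g j k]
      ring
    have hL : (∑ j ∈ Finset.range (n+1), ((n.choose j : ZMod p) * v^j * u^(n-j) * ξ) * (∑ g ∈ G, g^(j+k+1)))
      + (∑ j ∈ Finset.range (n+1), ((n.choose j : ZMod p) * v^j * u^(n-j) * μ) * (∑ g ∈ G, g^(j+k)))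
        = ∑ g ∈ G, g^k * ((ξ*g+μ) * (v*g+u)^n) := by
      rw [← Finset.sum_add_distrib]
      rw [Finset.sum_congr rfl (fun j (hj : j ∈ Finset.range (n+1)) => by
        rw [Finset.mul_sum, Finset.mul_sum, ← Finset.sum_add_distrib])]
      rw [Finset.sum_comm]
      exact Finset.sum_congr rfl (fun g _ => (hterm g).symm)
    have hR : ξ^n * (∑ j ∈ Finset.range (n+1+1), (((n+1).choose j : ZMod p) * ξ^j * μ^(n+1-j)) * (∑ g ∈ G, g^(j+k)))
        = ∑ g ∈ G, g^k * (ξ^n * (ξ*g+μ)^(n+1)) := by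
      rw [Finset.mul_sum]
      rw [Finset.sum_congr rfl (fun j (hj : j ∈ Finset.range (n+1+1)) => by
        rw [Finset.mul_sum, Finset.mul_sum])]
      rw [Finset.sum_comm]
      exact Finset.sum_congr rfl (fun g _ => (hterm2 g).symm)
    rw [hL, hR]
    refine Finset.sum_congr rfl (fun g hg => ?_)
    linear_combination (g^k) * key g hg
  -- cast identities for binomial coefficients
  have hcast1 : ((n - 1 : ℕ) : ZMod p) = (n : ZMod p) - 1 := by
    rw [Nat.cast_sub (by omega)]; norm_num
  have hcast2 : ((n - 2 : ℕ) : ZMod p) = (n : ZMod p) - 2 := by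
    rw [Nat.cast_sub (by omega)]; norm_num
  have hch2 : ((n.choose 2 : ℕ) : ZMod p) * 2 = (n : ZMod p) * ((n : ZMod p) - 1) := by
    have h := Nat.choose_succ_right_eq n 1
    rw [Nat.choose_one_right] at h
    have h2 := congrArg (fun m : ℕ => (m : ZMod p)) h
    push_cast at h2
    rw [hcast1] at h2
    exact h2
  have hch3 : ((n.choose 3 : ℕ) : ZMod p) * 6
      = (n : ZMod p) * ((n : ZMod p) - 1) * ((n : ZMod p) - 2) := by
    have h := Nat.choose_succ_right_eq n 2
    have h2 := congrArg (fun m : ℕ => (m : ZMod p)) h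
    push_cast at h2
    rw [hcast2] at h2
    calc ((n.choose 3 : ℕ) : ZMod p) * 6 = (((n.choose 3 : ℕ) : ZMod p) * 3) * 2 := by ring
    _ = (((n.choose 2 : ℕ) : ZMod p) * ((n : ZMod p) - 2)) * 2 := by rw [h2]
    _ = (((n.choose 2 : ℕ) : ZMod p) * 2) * ((n : ZMod p) - 2) := by ring
    _ = _ := by rw [hch2]
  have hch2' : (((n+1).choose 2 : ℕ) : ZMod p) * 2 = ((n : ZMod p) + 1) * (n : ZMod p) := by
    have h := Nat.choose_succ_right_eq (n+1) 1
    rw [Nat.choose_one_right] at h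
    have h2 := congrArg (fun m : ℕ => (m : ZMod p)) h
    have h3 : n + 1 - 1 = n := by omega
    rw [h3] at h2
    push_cast at h2
    exact h2
  have hch3' : (((n+1).choose 3 : ℕ) : ZMod p) * 6
      = ((n : ZMod p) + 1) * (n : ZMod p) * ((n : ZMod p) - 1) := by
    have h := Nat.choose_succ_right_eq (n+1) 2
    have h3 : n + 1 - 2 = n - 1 := by omega
    rw [h3] at h
    have h2 := congrArg (fun m : ℕ => (m : ZMod p)) h
    push_cast at h2
    rw [hcast1] at h2
    calc (((n+1).choose 3 : ℕ) : ZMod p) * 6 = ((((n+1).choose 3 : ℕ) : ZMod p) * 3) * 2 := by ring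
    _ = ((((n+1).choose 2 : ℕ) : ZMod p) * ((n : ZMod p) - 1)) * 2 := by rw [h2]
    _ = ((((n+1).choose 2 : ℕ) : ZMod p) * 2) * ((n : ZMod p) - 1) := by ring
    _ = _ := by rw [hch2']
  have hNm1 : (n : ZMod p) - 1 ≠ 0 := by
    rw [← hcast1]; exact hcast (n-1) (by omega) (by omega)
  have hNp1 : (n : ZMod p) + 1 ≠ 0 := by
    have h := hcast (n+1) (by omega) (by omega)
    push_cast at h; exact h
  have hd2ne : (((n+1).choose 2 : ℕ) : ZMod p) ≠ 0 := by
    intro h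
    rw [h, zero_mul] at hch2'
    rcases mul_eq_zero.mp hch2'.symm with h' | h'
    · exact hNp1 h'
    · exact hN0 h'
  -- W1 : relation from k = 1
  have e11 : (∑ j ∈ Finset.range (n+1), ((n.choose j : ZMod p) * v^j * u^(n-j) * ξ) * (∑ g ∈ G, g^(j+1+1)))
      = ((n.choose 2 : ZMod p) * v^(n-2) * u^2 * ξ) * ((n : ℕ) : ZMod p) := by
    rw [Finset.sum_eq_single_of_mem (n-2) (Finset.mem_range.mpr (by omega)) (fun j hj hne => by
      rw [hT, if_neg (hndvd (j+1+1) (by omega)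
        (by have := Finset.mem_range.mp hj; omega) (by omega)), mul_zero])]
    have h1 : n-2+1+1 = n := by omega
    have h2 : n-(n-2) = 2 := by omega
    have h3 : n.choose (n-2) = n.choose 2 := Nat.choose_symm (by omega)
    rw [h1, h2, h3, hT, if_pos dvd_rfl]
  have e12 : (∑ j ∈ Finset.range (n+1), ((n.choose j : ZMod p) * v^j * u^(n-j) * μ) * (∑ g ∈ G, g^(j+1)))
      = (((n : ℕ) : ZMod p) * v^(n-1) * u^1 * μ) * ((n : ℕ) : ZMod p) := by
    rw [Finset.sum_eq_single_of_mem (n-1) (Finset.mem_range.mpr (by omega)) (fun j hj hne => by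
      rw [hT, if_neg (hndvd (j+1) (by omega)
        (by have := Finset.mem_range.mp hj; omega) (by omega)), mul_zero])]
    have h1 : n-1+1 = n := by omega
    have h2 : n-(n-1) = 1 := by omega
    have h3 : n.choose (n-1) = n := by
      have := Nat.choose_symm (show 1 ≤ n by omega)
      rwa [Nat.choose_one_right] at this
    rw [h1, h2, h3, hT, if_pos dvd_rfl]
  have e13 : (∑ j ∈ Finset.range (n+1+1), (((n+1).choose j : ZMod p) * ξ^j * μ^(n+1-j)) * (∑ g ∈ G, g^(j+1)))
      = (((n+1).choose 2 : ZMod p) * ξ^(n-1) * μ^2) * ((n : ℕ) : ZMod p) := by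
    rw [Finset.sum_eq_single_of_mem (n-1) (Finset.mem_range.mpr (by omega)) (fun j hj hne => by
      rw [hT, if_neg (hndvd (j+1) (by omega)
        (by have := Finset.mem_range.mp hj; omega) (by omega)), mul_zero])]
    have h1 : n-1+1 = n := by omega
    have h2 : n+1-(n-1) = 2 := by omega
    have h3 : (n+1).choose (n-1) = (n+1).choose 2 := by
      have h4 : n - 1 = n + 1 - 2 := by omega
      rw [h4]; exact Nat.choose_symm (by omega)
    rw [h1, h2, h3, hT, if_pos dvd_rfl]
  have hW1 : (n.choose 2 : ZMod p) * v^(n-2) * u^2 * ξ + ((n : ℕ) : ZMod p) * v^(n-1) * u * μ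
      = ξ^n * (((n+1).choose 2 : ZMod p) * ξ^(n-1) * μ^2) := by
    have h := hEXP 1
    rw [e11] at h
    rw [show (∑ j ∈ Finset.range (n+1), ((n.choose j : ZMod p) * v^j * u^(n-j) * μ) * (∑ g ∈ G, g^(j+1)))
        = (((n : ℕ) : ZMod p) * v^(n-1) * u^1 * μ) * ((n : ℕ) : ZMod p) from e12] at h
    rw [show (∑ j ∈ Finset.range (n+1+1), (((n+1).choose j : ZMod p) * ξ^j * μ^(n+1-j)) * (∑ g ∈ G, g^(j+1)))
        = (((n+1).choose 2 : ZMod p) * ξ^(n-1) * μ^2) * ((n : ℕ) : ZMod p) from e13] at h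
    apply mul_right_cancel₀ hN0
    linear_combination h
  -- W2 : relation from k = n-2
  have e21 : (∑ j ∈ Finset.range (n+1), ((n.choose j : ZMod p) * v^j * u^(n-j) * ξ) * (∑ g ∈ G, g^(j+(n-2)+1)))
      = (((n : ℕ) : ZMod p) * v^1 * u^(n-1) * ξ) * ((n : ℕ) : ZMod p) := by
    rw [Finset.sum_eq_single_of_mem 1 (Finset.mem_range.mpr (by omega)) (fun j hj hne => by
      rw [hT, if_neg (hndvd (j+(n-2)+1) (by omega)
        (by have := Finset.mem_range.mp hj; omega) (by omega)), mul_zero])]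
    have h1 : 1+(n-2)+1 = n := by omega
    have h2 : n-1 = n-1 := rfl
    rw [h1, Nat.choose_one_right, hT, if_pos dvd_rfl]
  have e22 : (∑ j ∈ Finset.range (n+1), ((n.choose j : ZMod p) * v^j * u^(n-j) * μ) * (∑ g ∈ G, g^(j+(n-2))))
      = ((n.choose 2 : ZMod p) * v^2 * u^(n-2) * μ) * ((n : ℕ) : ZMod p) := by
    rw [Finset.sum_eq_single_of_mem 2 (Finset.mem_range.mpr (by omega)) (fun j hj hne => by
      rw [hT, if_neg (hndvd (j+(n-2)) (by omega)
        (by have := Finset.mem_range.mp hj; omega) (by omega)), mul_zero])]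
    have h1 : 2+(n-2) = n := by omega
    rw [h1, hT, if_pos dvd_rfl]
  have e23 : (∑ j ∈ Finset.range (n+1+1), (((n+1).choose j : ZMod p) * ξ^j * μ^(n+1-j)) * (∑ g ∈ G, g^(j+(n-2))))
      = (((n+1).choose 2 : ZMod p) * ξ^2 * μ^(n-1)) * ((n : ℕ) : ZMod p) := by
    rw [Finset.sum_eq_single_of_mem 2 (Finset.mem_range.mpr (by omega)) (fun j hj hne => by
      rw [hT, if_neg (hndvd (j+(n-2)) (by omega)
        (by have := Finset.mem_range.mp hj; omega) (by omega)), mul_zero])]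
    have h1 : 2+(n-2) = n := by omega
    have h2 : n+1-2 = n-1 := by omega
    rw [h1, h2, hT, if_pos dvd_rfl]
  have hW2 : ((n : ℕ) : ZMod p) * v * u^(n-1) * ξ + (n.choose 2 : ZMod p) * v^2 * u^(n-2) * μ
      = ξ^n * (((n+1).choose 2 : ZMod p) * ξ^2 * μ^(n-1)) := by
    have h := hEXP (n-2)
    rw [e21, e22, e23] at h
    apply mul_right_cancel₀ hN0
    linear_combination h
  rcases Nat.lt_or_ge n 4 with hn4 | hn4
  · -- Case n = 3
    have h3 : n = 3 := by omega
    have hK2 := hEXP 2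
    rw [h3] at hW1 hE4 hT hK2
    norm_num at hW1
    simp only [Finset.sum_range_succ, Finset.sum_range_zero, hT] at hK2
    norm_num at hK2
    rw [hv_def, hu_def, show Nat.choose 4 2 = 6 from rfl] at hW1
    rw [hv_def, hu_def] at hK2
    have hE43 : (1 - μ)^3 = ξ^3 := hE4
    have h9 : (3*(μ*ξ^2)) * (μ^2*(1-μ^2) - (1-μ^2)^2 - 2*ξ^3*μ) = (3*(μ*ξ^2)) * 0 := by
      linear_combination hW1
    have hA1 : μ^2*(1-μ^2) - (1-μ^2)^2 - 2*ξ^3*μ = 0 :=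
      mul_left_cancel₀ (mul_ne_zero h3ne (mul_ne_zero hμ (pow_ne_zero 2 hξ))) h9
    have h9b : (3*ξ) * ((1-μ^2)^3 - 3*μ^2*(1-μ^2)^2 - 5*μ^3*ξ^3 - ξ^6) = (3*ξ) * 0 := by
      linear_combination hK2
    have hA2 : (1-μ^2)^3 - 3*μ^2*(1-μ^2)^2 - 5*μ^3*ξ^3 - ξ^6 = 0 :=
      mul_left_cancel₀ (mul_ne_zero h3ne hξ) h9b
    have hG1 : (1-μ) * (6*μ^2-3*μ-1) = (1-μ) * 0 := by
      linear_combination hA1 - 2*μ*hE43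
    have hG1' : 6*μ^2-3*μ-1 = 0 :=
      mul_left_cancel₀ (sub_ne_zero.mpr (Ne.symm hμ1)) hG1
    have hG2pre : ((1-μ)^2*(3*μ)) * (2-3*μ-3*μ^2) = ((1-μ)^2*(3*μ)) * 0 := by
      linear_combination hA2 - (5*μ^3 + ξ^3 + (1-μ)^3)*hE43
    have hG2 : 2-3*μ-3*μ^2 = 0 :=
      mul_left_cancel₀ (mul_ne_zero (pow_ne_zero 2 (sub_ne_zero.mpr (Ne.symm hμ1)))
        (mul_ne_zero h3ne hμ)) hG2pre
    have hμ3 : (3:ZMod p) * (3*μ-1) = (3:ZMod p) * 0 := by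
      linear_combination -2*hG2 - hG1'
    have hμ3' : 3*μ-1 = 0 := mul_left_cancel₀ h3ne hμ3
    have hfinal : (2:ZMod p) = 0 := by
      linear_combination (3*μ+4)*hμ3' + 3*hG2
    exact h2ne hfinal
  · -- Case n ≥ 4
    -- W4 : relation from k = 2
    have e41 : (∑ j ∈ Finset.range (n+1), ((n.choose j : ZMod p) * v^j * u^(n-j) * ξ) * (∑ g ∈ G, g^(j+2+1)))
        = ((n.choose 3 : ZMod p) * v^(n-3) * u^3 * ξ) * ((n : ℕ) : ZMod p) := by
      rw [Finset.sum_eq_single_of_mem (n-3) (Finset.mem_range.mpr (by omega)) (fun j hj hne => by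
        rw [hT, if_neg (hndvd (j+2+1) (by omega)
          (by have := Finset.mem_range.mp hj; omega) (by omega)), mul_zero])]
      have h1 : n-3+2+1 = n := by omega
      have h2 : n-(n-3) = 3 := by omega
      have h3 : n.choose (n-3) = n.choose 3 := Nat.choose_symm (by omega)
      rw [h1, h2, h3, hT, if_pos dvd_rfl]
    have e42 : (∑ j ∈ Finset.range (n+1), ((n.choose j : ZMod p) * v^j * u^(n-j) * μ) * (∑ g ∈ G, g^(j+2)))
        = ((n.choose 2 : ZMod p) * v^(n-2) * u^2 * μ) * ((n : ℕ) : ZMod p) := by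
      rw [Finset.sum_eq_single_of_mem (n-2) (Finset.mem_range.mpr (by omega)) (fun j hj hne => by
        rw [hT, if_neg (hndvd (j+2) (by omega)
          (by have := Finset.mem_range.mp hj; omega) (by omega)), mul_zero])]
      have h1 : n-2+2 = n := by omega
      have h2 : n-(n-2) = 2 := by omega
      have h3 : n.choose (n-2) = n.choose 2 := Nat.choose_symm (by omega)
      rw [h1, h2, h3, hT, if_pos dvd_rfl]
    have e43 : (∑ j ∈ Finset.range (n+1+1), (((n+1).choose j : ZMod p) * ξ^j * μ^(n+1-j)) * (∑ g ∈ G, g^(j+2)))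
        = (((n+1).choose 3 : ZMod p) * ξ^(n-2) * μ^3) * ((n : ℕ) : ZMod p) := by
      rw [Finset.sum_eq_single_of_mem (n-2) (Finset.mem_range.mpr (by omega)) (fun j hj hne => by
        rw [hT, if_neg (hndvd (j+2) (by omega)
          (by have := Finset.mem_range.mp hj; omega) (by omega)), mul_zero])]
      have h1 : n-2+2 = n := by omega
      have h2 : n+1-(n-2) = 3 := by omega
      have h3 : (n+1).choose (n-2) = (n+1).choose 3 := by
        have h4 : n - 2 = n + 1 - 3 := by omega
        rw [h4]; exact Nat.choose_symm (by omega)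
      rw [h1, h2, h3, hT, if_pos dvd_rfl]
    have hW4 : (n.choose 3 : ZMod p) * v^(n-3) * u^3 * ξ + (n.choose 2 : ZMod p) * v^(n-2) * u^2 * μ
        = ξ^n * (((n+1).choose 3 : ZMod p) * ξ^(n-2) * μ^3) := by
      have h := hEXP 2
      rw [e41, e42, e43] at h
      apply mul_right_cancel₀ hN0
      linear_combination h
    -- W5 : relation from k = n-3
    have e51 : (∑ j ∈ Finset.range (n+1), ((n.choose j : ZMod p) * v^j * u^(n-j) * ξ) * (∑ g ∈ G, g^(j+(n-3)+1)))
        = ((n.choose 2 : ZMod p) * v^2 * u^(n-2) * ξ) * ((n : ℕ) : ZMod p) := by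
      rw [Finset.sum_eq_single_of_mem 2 (Finset.mem_range.mpr (by omega)) (fun j hj hne => by
        rw [hT, if_neg (hndvd (j+(n-3)+1) (by omega)
          (by have := Finset.mem_range.mp hj; omega) (by omega)), mul_zero])]
      have h1 : 2+(n-3)+1 = n := by omega
      rw [h1, Nat.choose_two_right, ← Nat.choose_two_right, hT, if_pos dvd_rfl]
    have e52 : (∑ j ∈ Finset.range (n+1), ((n.choose j : ZMod p) * v^j * u^(n-j) * μ) * (∑ g ∈ G, g^(j+(n-3))))
        = ((n.choose 3 : ZMod p) * v^3 * u^(n-3) * μ) * ((n : ℕ) : ZMod p) := by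
      rw [Finset.sum_eq_single_of_mem 3 (Finset.mem_range.mpr (by omega)) (fun j hj hne => by
        rw [hT, if_neg (hndvd (j+(n-3)) (by omega)
          (by have := Finset.mem_range.mp hj; omega) (by omega)), mul_zero])]
      have h1 : 3+(n-3) = n := by omega
      rw [h1, hT, if_pos dvd_rfl]
    have e53 : (∑ j ∈ Finset.range (n+1+1), (((n+1).choose j : ZMod p) * ξ^j * μ^(n+1-j)) * (∑ g ∈ G, g^(j+(n-3))))
        = (((n+1).choose 3 : ZMod p) * ξ^3 * μ^(n-2)) * ((n : ℕ) : ZMod p) := by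
      rw [Finset.sum_eq_single_of_mem 3 (Finset.mem_range.mpr (by omega)) (fun j hj hne => by
        rw [hT, if_neg (hndvd (j+(n-3)) (by omega)
          (by have := Finset.mem_range.mp hj; omega) (by omega)), mul_zero])]
      have h1 : 3+(n-3) = n := by omega
      have h2 : n+1-3 = n-2 := by omega
      rw [h1, h2, hT, if_pos dvd_rfl]
    have hW5 : (n.choose 2 : ZMod p) * v^2 * u^(n-2) * ξ + (n.choose 3 : ZMod p) * v^3 * u^(n-3) * μ
        = ξ^n * (((n+1).choose 3 : ZMod p) * ξ^3 * μ^(n-2)) := by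
      have h := hEXP (n-3)
      rw [e51, e52, e53] at h
      apply mul_right_cancel₀ hN0
      linear_combination h
    -- u ≠ 0
    have hu0 : u ≠ 0 := by
      intro h0
      have hne : ξ^n * (((n+1).choose 2 : ZMod p) * ξ^(n-1) * μ^2) ≠ 0 :=
        mul_ne_zero (pow_ne_zero n hξ)
          (mul_ne_zero (mul_ne_zero hd2ne (pow_ne_zero _ hξ)) (pow_ne_zero 2 hμ))
      apply hne
      rw [← hW1, h0]; ring
    -- substitute v and split powers
    rw [hv_def] at hW1 hW2 hW4 hW5
    have hsv1 : (-(μ*ξ))^(n-2) = (-(μ*ξ))^(n-3) * (-(μ*ξ)) := by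
      rw [← pow_succ]; congr 1; omega
    have hsv2 : (-(μ*ξ))^(n-1) = (-(μ*ξ))^(n-3) * (-(μ*ξ))^2 := by
      rw [← pow_add]; congr 1; omega
    have hsx1 : ξ^(n-1) = ξ^(n-2) * ξ := by rw [← pow_succ]; congr 1; omega
    have hsxn : ξ^n = ξ^(n-2) * ξ^2 := by rw [← pow_add]; congr 1; omega
    have hsu1 : u^(n-1) = u^(n-3) * u^2 := by rw [← pow_add]; congr 1; omega
    have hsu2 : u^(n-2) = u^(n-3) * u := by rw [← pow_succ]; congr 1; omega
    have hsm1 : μ^(n-1) = μ^(n-2) * μ := by rw [← pow_succ]; congr 1; omega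
    rw [hsv1, hsv2, hsx1, hsxn] at hW1
    rw [hsv1, hsxn] at hW4
    rw [hsu1, hsu2, hsm1, hsxn] at hW2
    rw [hsu2, hsxn] at hW5
    -- combo 1 : from W1 and W4
    have hcomb1 : ((-(μ*ξ))^(n-3) * (ξ^2*u)) *
        (((n+1).choose 2 : ZMod p) * (n.choose 3 : ZMod p) * u^2
          - ((n+1).choose 2 : ZMod p) * (n.choose 2 : ZMod p) * μ^2 * u
          + ((n+1).choose 3 : ZMod p) * (n.choose 2 : ZMod p) * μ^2 * u
          - ((n+1).choose 3 : ZMod p) * ((n:ℕ) : ZMod p) * μ^4)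
        = ((-(μ*ξ))^(n-3) * (ξ^2*u)) * 0 := by
      linear_combination (((n+1).choose 2 : ZMod p) * ξ) * hW4
        - (((n+1).choose 3 : ZMod p) * μ) * hW1
    have hBR := mul_left_cancel₀ (mul_ne_zero
      (pow_ne_zero _ (neg_ne_zero.mpr (mul_ne_zero hμ hξ)))
      (mul_ne_zero (pow_ne_zero 2 hξ) hu0)) hcomb1
    -- combo 2 : from W2 and W5
    have hcomb2 : (u^(n-3) * (ξ^3*μ)) *
        (((n+1).choose 3 : ZMod p) * ((n.choose 2 : ZMod p) * μ^2 * u - ((n:ℕ) : ZMod p) * u^2)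
          - ((n+1).choose 2 : ZMod p) * ((n.choose 2 : ZMod p) * μ^2 * u - (n.choose 3 : ZMod p) * μ^4))
        = (u^(n-3) * (ξ^3*μ)) * 0 := by
      linear_combination (((n+1).choose 3 : ZMod p) * ξ) * hW2
        - (((n+1).choose 2 : ZMod p) * μ) * hW5
    have hBR2 := mul_left_cancel₀ (mul_ne_zero (pow_ne_zero _ hu0)
      (mul_ne_zero (pow_ne_zero 3 hξ) hμ)) hcomb2
    rw [hu_def] at hBR hBR2
    -- eliminate binomial casts
    have hP1 : ((((n:ℕ):ZMod p))^2 * ((((n:ℕ):ZMod p))-1) * ((((n:ℕ):ZMod p))+1)) *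
        (((((n:ℕ):ZMod p)) - 2) - (((n:ℕ):ZMod p))*μ^2)
        = ((((n:ℕ):ZMod p))^2 * ((((n:ℕ):ZMod p))-1) * ((((n:ℕ):ZMod p))+1)) * 0 := by
      linear_combination 12*hBR
        - (2*(((n+1).choose 2 : ZMod p))*(1-μ^2)^2)*hch3
        - (((((n:ℕ):ZMod p))*((((n:ℕ):ZMod p))-1)*((((n:ℕ):ZMod p))-2))*(1-μ^2)^2
            - 3*((((n:ℕ):ZMod p))*((((n:ℕ):ZMod p))-1))*μ^2*(1-μ^2))*hch2'
        - ((-6)*(((n+1).choose 2 : ZMod p))*μ^2*(1-μ^2)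
            + 6*(((n+1).choose 3 : ZMod p))*μ^2*(1-μ^2))*hch2
        - (((((n:ℕ):ZMod p))*((((n:ℕ):ZMod p))-1))*μ^2*(1-μ^2) - 2*(((n:ℕ):ZMod p))*μ^4)*hch3'
    have hP2 : ((((n:ℕ):ZMod p))^2 * ((((n:ℕ):ZMod p))-1) * ((((n:ℕ):ZMod p))+1)) *
        ((((n:ℕ):ZMod p))*μ^2 - 2)
        = ((((n:ℕ):ZMod p))^2 * ((((n:ℕ):ZMod p))-1) * ((((n:ℕ):ZMod p))+1)) * 0 := by
      linear_combination 12*hBR2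
        - (6*(((n+1).choose 3 : ZMod p))*μ^2*(1-μ^2) - 6*(((n+1).choose 2 : ZMod p))*μ^2*(1-μ^2))*hch2
        - (((((n:ℕ):ZMod p))*((((n:ℕ):ZMod p))-1))*μ^2*(1-μ^2) - 2*(((n:ℕ):ZMod p))*(1-μ^2)^2)*hch3'
        - ((-3)*((((n:ℕ):ZMod p))*((((n:ℕ):ZMod p))-1))*μ^2*(1-μ^2)
            + ((((n:ℕ):ZMod p))*((((n:ℕ):ZMod p))-1)*((((n:ℕ):ZMod p))-2))*μ^4)*hch2'
        - (2*(((n+1).choose 2 : ZMod p))*μ^4)*hch3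
    have hNNe : ((((n:ℕ):ZMod p))^2 * ((((n:ℕ):ZMod p))-1) * ((((n:ℕ):ZMod p))+1)) ≠ 0 :=
      mul_ne_zero (mul_ne_zero (pow_ne_zero 2 hN0) hNm1) hNp1
    have hP1' := mul_left_cancel₀ hNNe hP1
    have hP2' := mul_left_cancel₀ hNNe hP2
    -- N = 4 as a natural number
    have hN4 : ((n:ℕ) : ZMod p) = 4 := by linear_combination hP1' + hP2'
    have hn4e : n = 4 := by
      have hval := congrArg ZMod.val hN4
      rw [ZMod.val_cast_of_lt (show n < p by omega)] at hval
      rw [show ((4:ZMod p)) = ((4:ℕ) : ZMod p) by norm_num] at hval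
      rw [ZMod.val_cast_of_lt (show 4 < p by omega)] at hval
      exact hval
    -- endgame at n = 4
    have hhalfpre : (2:ZMod p) * (2*μ^2 - 1) = (2:ZMod p) * 0 := by
      rw [hN4] at hP2'
      linear_combination hP2'
    have hhalf : 2*μ^2 - 1 = 0 := mul_left_cancel₀ h2ne hhalfpre
    rw [hn4e] at hW2 hE4
    rw [hu_def] at hW2
    norm_num at hW2
    rw [show Nat.choose 4 2 = 6 from rfl, show Nat.choose 5 2 = 10 from rfl] at hW2
    push_cast at hW2
    have hq : (μ*ξ^2) * (6*μ^2*(1-μ^2)^2 - 4*(1-μ^2)^3 - 10*ξ^4*μ^2) = (μ*ξ^2) * 0 := by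
      linear_combination hW2
    have hq' := mul_left_cancel₀ (mul_ne_zero hμ (pow_ne_zero 2 hξ)) hq
    have h20 : (20:ZMod p)*ξ^4 = 1 := by
      linear_combination (-4)*hq' + (-20*ξ^4+20*μ^4-38*μ^2+17)*hhalf
    have h84 : (120:ZMod p)*μ = 84 := by
      linear_combination (-1)*h20 - 20*hE4 + (10*μ^2+65-40*μ)*hhalf
    have h144 : ((144:ℕ):ZMod p) = 0 := by
      push_cast
      linear_combination (120*μ+84)*h84 - 7200*hhalf
    have hdvd : p ∣ 144 := (ZMod.natCast_eq_zero_iff 144 p).mp h144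
    have h169 : p ∣ 16 * 9 := by rw [show (16*9 : ℕ) = 144 by norm_num]; exact hdvd
    rcases (Nat.Prime.dvd_mul hp).mp h169 with h | h
    · have h2d : p ∣ 2 := hp.dvd_of_dvd_pow (by rw [show ((2:ℕ)^4) = 16 by norm_num]; exact h)
      have := Nat.le_of_dvd (by norm_num) h2d
      omega
    · have h3d : p ∣ 3 := hp.dvd_of_dvd_pow (by rw [show ((3:ℕ)^2) = 9 by norm_num]; exact h)
      have := Nat.le_of_dvd (by norm_num) h3d
      omega
end
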